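/- arXiv:1912.04586 — 8 statements merged into one kernel-verified Lean document; each statement's English description precedes it below -/
import Mathlib

section
/- Let K ⊆ L be number fields and let m = [L : K] be the relative degree, so that every complex embedding σ : K → ℂ has exactly m extensions τ : L → ℂ. Then for every α ∈ L: |N_{L/ℚ}(α)|² ≤ ∏_{σ : K → ℂ} ( (1/m) · ∑_{τ : L → ℂ, τ∣_K = σ} |τ(α)|² )^m. (This is the inequality between relative arithmetic and geometric norms: the absolute norm of α is bounded by the product over embeddings of K of the m-th power of the normalized relative Hermitian norm, i.e. |N_{L/ℚ}(α)| ≤ (N_{K/ℚ}(‖α‖_{L/K})/√m)^m.) -/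
open scoped Classical

/-- The extensions of `σ : K →+* ℂ` to `L` are in bijection with `K`-algebra homs `L →ₐ[K] ℂ`
(where `ℂ` is a `K`-algebra via `σ`), hence there are exactly `finrank K L` of them. -/
theorem aux_card_extensions (K L : Type*) [Field K] [Field L]
    [NumberField K] [NumberField L] [Algebra K L] (σ : K →+* ℂ) :
    (Finset.univ.filter (fun τ : L →+* ℂ => τ.comp (algebraMap K L) = σ)).card =
      Module.finrank K L := by
  letI : Algebra K ℂ := σ.toAlgebra
  have e : {τ : L →+* ℂ // τ.comp (algebraMap K L) = σ} ≃ (L →ₐ[K] ℂ) :=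
    { toFun := fun τ =>
        { toRingHom := τ.1
          commutes' := fun k => RingHom.congr_fun τ.2 k }
      invFun := fun f =>
        ⟨(f : L →+* ℂ), RingHom.ext fun k => f.commutes k⟩
      left_inv := fun τ => rfl
      right_inv := fun f => rfl }
  rw [← Fintype.card_subtype]
  rw [Fintype.card_congr e]
  exact AlgHom.card K L ℂ

/-- Inequality between relative arithmetic and geometric norms: for number fields `K ⊆ L` of
relative degree `m`, the square of the absolute norm of `α ∈ L` is bounded by the product over
the embeddings `σ` of `K` of the `m`-th power of the average of `|τ(α)|²` over the `m`
extensions `τ` of `σ` to `L`. -/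
theorem relative_arithmetic_geometric_norm_inequality (K L : Type*) [Field K] [Field L]
    [NumberField K] [NumberField L] [Algebra K L] (α : L) :
    ((|Algebra.norm ℚ α| : ℚ) : ℝ) ^ 2 ≤
      ∏ σ : K →+* ℂ,
        ((1 / (Module.finrank K L : ℝ)) *
          ∑ τ ∈ Finset.univ.filter (fun τ : L →+* ℂ => τ.comp (algebraMap K L) = σ),
            ‖τ α‖ ^ 2) ^ (Module.finrank K L) := by
  set m := Module.finrank K L with hm
  have hm0 : 0 < m := Module.finrank_pos
  have hmR : (0 : ℝ) < (m : ℝ) := by exact_mod_cast hm0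
  -- |N(α)| = ∏ τ |τ α|
  have hN : ((|Algebra.norm ℚ α| : ℚ) : ℝ) = ∏ τ : L →+* ℂ, ‖τ α‖ := by
    have h := congrArg (‖·‖) (Algebra.norm_eq_prod_embeddings ℚ ℂ α)
    rw [norm_prod] at h
    have h2 : ‖algebraMap ℚ ℂ (Algebra.norm ℚ α)‖ =
        ((|Algebra.norm ℚ α| : ℚ) : ℝ) := by
      rw [eq_ratCast, Rat.cast_abs, Complex.norm_ratCast]
    rw [← h2, h]
    exact (Fintype.prod_equiv (RingHom.equivRatAlgHom L ℂ) (fun τ => ‖τ α‖)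
      (fun φ => ‖φ α‖) fun τ => by simp [RingHom.equivRatAlgHom_apply]).symm
  have hN2 : ((|Algebra.norm ℚ α| : ℚ) : ℝ) ^ 2 = ∏ τ : L →+* ℂ, ‖τ α‖ ^ 2 := by
    rw [hN, ← Finset.prod_pow]
  rw [hN2,
    ← Finset.prod_fiberwise Finset.univ (fun τ : L →+* ℂ => τ.comp (algebraMap K L))
      (fun τ => ‖τ α‖ ^ 2)]
  refine Finset.prod_le_prod (fun σ _ => Finset.prod_nonneg fun τ _ => by positivity)
    (fun σ _ => ?_)
  -- AM-GM on each fiber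
  set s := Finset.univ.filter (fun τ : L →+* ℂ => τ.comp (algebraMap K L) = σ) with hs
  have hcard : s.card = m := aux_card_extensions K L σ
  have hz : ∀ τ ∈ s, (0 : ℝ) ≤ ‖τ α‖ ^ 2 := fun τ _ => by positivity
  have hAM := Real.geom_mean_le_arith_mean_weighted s (fun _ => 1 / (m : ℝ))
    (fun τ => ‖τ α‖ ^ 2) (fun _ _ => by positivity)
    (by rw [Finset.sum_const, hcard, nsmul_eq_mul]; field_simp) hz
  have hprod : ∏ τ ∈ s, (‖τ α‖ ^ 2 : ℝ) ^ ((1 : ℝ) / m) =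
      (∏ τ ∈ s, (‖τ α‖ ^ 2 : ℝ)) ^ ((1 : ℝ) / m) :=
    (Real.finset_prod_rpow s _ hz _)
  rw [hprod] at hAM
  have hsum : ∑ τ ∈ s, (1 / (m : ℝ)) * ‖τ α‖ ^ 2 =
      (1 / (m : ℝ)) * ∑ τ ∈ s, ‖τ α‖ ^ 2 := by
    rw [Finset.mul_sum]
  rw [hsum] at hAM
  have hP0 : (0 : ℝ) ≤ ∏ τ ∈ s, (‖τ α‖ ^ 2 : ℝ) :=
    Finset.prod_nonneg hz
  have := Real.rpow_le_rpow (Real.rpow_nonneg hP0 _) hAM (le_of_lt hmR)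
  rw [← Real.rpow_mul hP0, one_div, inv_mul_cancel₀ (ne_of_gt hmR), Real.rpow_one,
    Real.rpow_natCast] at this
  simpa [one_div] using this
end

section
/- Let E be a real inner product space, let d ≥ 1, let 1/4 < δ < 1, and let v₁, …, v_d ∈ E be linearly independent vectors with Gram–Schmidt orthogonalization v₁*, …, v_d* (where v_i* is the projection of v_i orthogonally to the span of v₁, …, v_{i−1}). Assume the basis is δ-LLL-reduced, i.e. (size-reduction) |⟨v_j, v_i*⟩| ≤ ‖v_i*‖²/2 for all i < j, and (Lovász condition) δ‖v_i*‖² ≤ ‖v_{i+1}*‖² + ⟨v_{i+1}, v_i*⟩²/‖v_i*‖² for all 1 ≤ i ≤ d−1. Then for every 1 ≤ k ≤ d: ∏_{i=1}^{k} ‖v_i*‖ ≤ (δ − 1/4)^{−(d−k)k/4} · ( ∏_{i=1}^{d} ‖v_i*‖ )^{k/d}. -/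
private theorem lll_aux_main (dR kR L S1 S2 : ℝ) (hdR : 0 < dR)
    (hsum : kR * ((dR - kR) * dR) / 2 * L + (dR - kR) * (2 * S1) ≤ kR * (2 * S2)) :
    S1 ≤ -((dR - kR) * kR / 4) * L + kR / dR * (S1 + S2) := by
  rw [← mul_le_mul_iff_right₀ hdR]
  have expand : dR * (-((dR - kR) * kR / 4) * L + kR / dR * (S1 + S2))
      = -((dR - kR) * kR * dR / 4) * L + kR * (S1 + S2) := by
    field_simp
  rw [expand]
  nlinarith [hsum]

/-- For a `δ`-LLL-reduced basis, the volume of the flag sublattice spanned by the first `k`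
vectors is bounded in terms of the total volume:
`∏_{i<k} ‖v_i*‖ ≤ (δ − 1/4)^{−(d−k)k/4} (∏_i ‖v_i*‖)^{k/d}`. -/
theorem lll_reduced_flag_volume_bound {E : Type*} [NormedAddCommGroup E]
    [InnerProductSpace ℝ E]
    (d : ℕ) (hd : 1 ≤ d) (δ : ℝ) (hδ1 : 1 / 4 < δ) (hδ2 : δ < 1)
    (v vStar : Fin d → E) (hlin : LinearIndependent ℝ v)
    (hGS : ∀ i : Fin d, vStar i =
      v i - ∑ j ∈ Finset.univ.filter (fun j => j < i),
        ((inner ℝ (v i) (vStar j) : ℝ) / (inner ℝ (vStar j) (vStar j) : ℝ)) • vStar j)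
    (hsize : ∀ i j : Fin d, i < j → |(inner ℝ (v j) (vStar i) : ℝ)| ≤ ‖vStar i‖ ^ 2 / 2)
    (hlovasz : ∀ (i : Fin d) (h : (i : ℕ) + 1 < d),
      δ * ‖vStar i‖ ^ 2 ≤ ‖vStar ⟨(i : ℕ) + 1, h⟩‖ ^ 2 +
        (inner ℝ (v ⟨(i : ℕ) + 1, h⟩) (vStar i) : ℝ) ^ 2 / ‖vStar i‖ ^ 2) :
    ∀ k : ℕ, 1 ≤ k → k ≤ d →
      ∏ i ∈ Finset.univ.filter (fun i : Fin d => (i : ℕ) < k), ‖vStar i‖ ≤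
        (δ - 1 / 4) ^ (-((((d : ℝ) - (k : ℝ)) * (k : ℝ)) / 4)) *
          (∏ i : Fin d, ‖vStar i‖) ^ ((k : ℝ) / (d : ℝ)) := by
  intro k hk1 hkd
  have hd0 : 0 < d := hd
  set α : ℝ := δ - 1 / 4 with hαdef
  have hα0 : 0 < α := by rw [hαdef]; linarith
  set a : ℕ → ℝ := fun i => if h : i < d then ‖vStar ⟨i, h⟩‖ else 1 with hadef
  have ha_eq : ∀ (i : ℕ) (h : i < d), a i = ‖vStar ⟨i, h⟩‖ := fun i h => dif_pos h
  -- one Lovász + size-reduction step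
  have step : ∀ i : ℕ, i + 1 < d → α * a i ^ 2 ≤ a (i + 1) ^ 2 := by
    intro i h
    have hi : i < d := by omega
    rw [ha_eq i hi, ha_eq (i + 1) h]
    have hlov := hlovasz ⟨i, hi⟩ h
    have hs := hsize ⟨i, hi⟩ ⟨i + 1, h⟩ (by simp [Fin.lt_def])
    set n := ‖vStar ⟨i, hi⟩‖ with hn
    set c := (inner ℝ (v ⟨i + 1, h⟩) (vStar ⟨i, hi⟩) : ℝ) with hc
    have hlov' : δ * n ^ 2 ≤ ‖vStar ⟨i + 1, h⟩‖ ^ 2 + c ^ 2 / n ^ 2 := hlov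
    by_cases hn0 : n = 0
    · rw [hn0]
      have : (0:ℝ) ≤ ‖vStar ⟨i + 1, h⟩‖ ^ 2 := by positivity
      nlinarith
    · have hn2 : 0 < n ^ 2 := by
        have : 0 ≤ n := norm_nonneg _
        positivity
      have hc2 : c ^ 2 ≤ (n ^ 2 / 2) ^ 2 := by
        calc c ^ 2 = |c| ^ 2 := (sq_abs c).symm
          _ ≤ (n ^ 2 / 2) ^ 2 := by
              apply pow_le_pow_left₀ (abs_nonneg c) hs
      have hdiv : c ^ 2 / n ^ 2 ≤ n ^ 2 / 4 := by
        rw [div_le_iff₀ hn2]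
        nlinarith
      rw [hαdef]
      nlinarith [hlov', hdiv]
  -- iterated step
  have key : ∀ i m : ℕ, i + m < d → α ^ m * a i ^ 2 ≤ a (i + m) ^ 2 := by
    intro i m
    induction m with
    | zero => intro _; simp
    | succ m ih =>
      intro h
      have h1 : i + m < d := by omega
      calc α ^ (m + 1) * a i ^ 2 = α * (α ^ m * a i ^ 2) := by ring
        _ ≤ α * a (i + m) ^ 2 := mul_le_mul_of_nonneg_left (ih h1) hα0.le
        _ ≤ a (i + m + 1) ^ 2 := step (i + m) (by omega)
  -- positivity of the Gram–Schmidt norms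
  have hv0 : vStar ⟨0, hd0⟩ = v ⟨0, hd0⟩ := by
    rw [hGS ⟨0, hd0⟩]
    have he : Finset.univ.filter (fun j : Fin d => j < ⟨0, hd0⟩) = ∅ := by
      apply Finset.filter_eq_empty_iff.mpr
      intro j _
      simp [Fin.lt_def]
    rw [he]
    simp
  have ha0 : 0 < a 0 := by
    rw [ha_eq 0 hd0, hv0]
    exact norm_pos_iff.mpr (hlin.ne_zero ⟨0, hd0⟩)
  have hpos : ∀ i : ℕ, 0 < a i := by
    intro i
    by_cases h : i < d
    · have hk0 := key 0 i (by omega)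
      rw [Nat.zero_add] at hk0
      have h2 : 0 < a i ^ 2 := lt_of_lt_of_le (mul_pos (pow_pos hα0 i) (pow_pos ha0 2)) hk0
      have h3 : 0 ≤ a i := by rw [ha_eq i h]; positivity
      nlinarith
    · rw [hadef]
      simp [h]
  have hne : ∀ i : ℕ, a i ≠ 0 := fun i => (hpos i).ne'
  -- logarithmic form of key
  set L := Real.log α with hL
  have hlog : ∀ i j : ℕ, i ≤ j → j < d →
      ((j : ℝ) - (i : ℝ)) * L + 2 * Real.log (a i) ≤ 2 * Real.log (a j) := by
    intro i j hij hjd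
    have hk0 := key i (j - i) (by omega)
    rw [(by omega : i + (j - i) = j)] at hk0
    have h1 := Real.log_le_log (mul_pos (pow_pos hα0 _) (pow_pos (hpos i) 2)) hk0
    rw [Real.log_mul (pow_ne_zero _ hα0.ne') (pow_ne_zero _ (hne i)),
      Real.log_pow, Real.log_pow, Real.log_pow] at h1
    rw [Nat.cast_sub hij] at h1
    push_cast at h1 ⊢
    linarith
  -- Gauss sum
  have gauss : ∀ n : ℕ, ∑ i ∈ Finset.range n, (i : ℝ) = (n : ℝ) * ((n : ℝ) - 1) / 2 := by
    intro n
    induction n with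
    | zero => simp
    | succ n ih =>
      rw [Finset.sum_range_succ, ih]
      push_cast
      ring
  set A := Finset.range k with hA
  set B := Finset.Ico k d with hB
  have hcardB : (B.card : ℝ) = (d : ℝ) - (k : ℝ) := by
    rw [hB, Nat.card_Ico, Nat.cast_sub hkd]
  have hcardA : (A.card : ℝ) = (k : ℝ) := by rw [hA, Finset.card_range]
  have hSB : ∑ j ∈ B, (j : ℝ) = ((d : ℝ) * ((d : ℝ) - 1) - (k : ℝ) * ((k : ℝ) - 1)) / 2 := by
    have h1 : ∑ j ∈ Finset.range k, (j : ℝ) + ∑ j ∈ B, (j : ℝ) = ∑ j ∈ Finset.range d, (j : ℝ) := by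
      rw [hB, Finset.range_eq_Ico, Finset.range_eq_Ico]
      exact Finset.sum_Ico_consecutive _ (Nat.zero_le k) hkd
    rw [gauss, gauss] at h1
    linarith
  have hSA : ∑ i ∈ A, (i : ℝ) = (k : ℝ) * ((k : ℝ) - 1) / 2 := gauss k
  set S1 := ∑ i ∈ A, Real.log (a i) with hS1
  set S2 := ∑ i ∈ B, Real.log (a i) with hS2
  have hS : ∑ i ∈ Finset.range d, Real.log (a i) = S1 + S2 := by
    rw [hS1, hS2, hA, hB, Finset.range_eq_Ico, Finset.range_eq_Ico]
    exact (Finset.sum_Ico_consecutive _ (Nat.zero_le k) hkd).symm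
  -- double sum of the log inequality
  have hsum : ∑ i ∈ A, ∑ j ∈ B, (((j : ℝ) - (i : ℝ)) * L + 2 * Real.log (a i))
      ≤ ∑ i ∈ A, ∑ j ∈ B, 2 * Real.log (a j) := by
    apply Finset.sum_le_sum
    intro i hi
    apply Finset.sum_le_sum
    intro j hj
    rw [hA, Finset.mem_range] at hi
    rw [hB, Finset.mem_Ico] at hj
    exact hlog i j (by omega) hj.2
  have eLHS : ∑ i ∈ A, ∑ j ∈ B, (((j : ℝ) - (i : ℝ)) * L + 2 * Real.log (a i))
      = ((k : ℝ) * (∑ j ∈ B, (j : ℝ)) - ((d : ℝ) - (k : ℝ)) * (∑ i ∈ A, (i : ℝ))) * L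
        + ((d : ℝ) - (k : ℝ)) * (2 * S1) := by
    have inner_eq : ∀ i : ℕ, ∑ j ∈ B, (((j : ℝ) - (i : ℝ)) * L + 2 * Real.log (a i))
        = ((∑ j ∈ B, (j : ℝ)) - ((d : ℝ) - (k : ℝ)) * (i : ℝ)) * L
          + ((d : ℝ) - (k : ℝ)) * (2 * Real.log (a i)) := by
      intro i
      rw [Finset.sum_add_distrib, Finset.sum_const, ← Finset.sum_mul, Finset.sum_sub_distrib,
        Finset.sum_const, nsmul_eq_mul, nsmul_eq_mul, hcardB]
    rw [Finset.sum_congr rfl (fun i _ => inner_eq i), Finset.sum_add_distrib, ← Finset.sum_mul,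
      Finset.sum_sub_distrib, Finset.sum_const, nsmul_eq_mul, hcardA, ← Finset.mul_sum,
      ← Finset.mul_sum, hS1, ← Finset.mul_sum]
  have eRHS : ∑ i ∈ A, ∑ j ∈ B, 2 * Real.log (a j) = (k : ℝ) * (2 * S2) := by
    rw [Finset.sum_const, nsmul_eq_mul, hcardA, hS2, ← Finset.mul_sum]
  have hT : (k : ℝ) * (∑ j ∈ B, (j : ℝ)) - ((d : ℝ) - (k : ℝ)) * (∑ i ∈ A, (i : ℝ))
      = (k : ℝ) * ((d : ℝ) - (k : ℝ)) * (d : ℝ) / 2 := by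
    rw [hSB, hSA]
    ring
  rw [eLHS, eRHS, hT] at hsum
  -- the main scalar inequality
  have hdR : (0 : ℝ) < (d : ℝ) := by exact_mod_cast hd0
  have hsum' : (k : ℝ) * (((d : ℝ) - (k : ℝ)) * (d : ℝ)) / 2 * L + ((d : ℝ) - (k : ℝ)) * (2 * S1)
      ≤ (k : ℝ) * (2 * S2) := by
    have e2 : (k : ℝ) * (((d : ℝ) - (k : ℝ)) * (d : ℝ)) / 2
        = (k : ℝ) * ((d : ℝ) - (k : ℝ)) * (d : ℝ) / 2 := by ring
    rw [e2]
    exact hsum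
  have main : S1 ≤ -(((d : ℝ) - (k : ℝ)) * (k : ℝ) / 4) * L + (k : ℝ) / (d : ℝ) * (S1 + S2) :=
    lll_aux_main (d : ℝ) (k : ℝ) L S1 S2 hdR hsum'
  -- convert the goal's products into products of `a`
  have hprod1 : ∏ i ∈ Finset.univ.filter (fun i : Fin d => (i : ℕ) < k), ‖vStar i‖
      = ∏ i ∈ A, a i := by
    have h1 : ∏ i ∈ A, a i
        = ∏ i ∈ Finset.range d, (fun n : ℕ => if n < k then a n else 1) i := by
      have h2 : ∏ i ∈ A, a i = ∏ i ∈ A, (fun n : ℕ => if n < k then a n else 1) i :=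
        Finset.prod_congr rfl (fun i hi =>
          (if_pos (Finset.mem_range.mp (by rwa [hA] at hi))).symm)
      rw [h2, hA]
      exact Finset.prod_subset (Finset.range_subset_range.mpr hkd)
        (fun x _ hnx => if_neg (by simpa using hnx))
    rw [h1, ← Fin.prod_univ_eq_prod_range, Finset.prod_filter]
    apply Finset.prod_congr rfl
    intro i _
    by_cases hik : (i : ℕ) < k
    · simp only [hik, if_true, ha_eq _ i.isLt, Fin.eta]
    · simp only [hik, if_false]
  have hprod2 : ∏ i : Fin d, ‖vStar i‖ = ∏ i ∈ Finset.range d, a i := by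
    rw [← Fin.prod_univ_eq_prod_range]
    exact Finset.prod_congr rfl (fun i _ => by rw [ha_eq _ i.isLt, Fin.eta])
  rw [hprod1, hprod2]
  have hP1 : 0 < ∏ i ∈ A, a i := Finset.prod_pos fun i _ => hpos i
  have hP : 0 < ∏ i ∈ Finset.range d, a i := Finset.prod_pos fun i _ => hpos i
  have hRHS : 0 < α ^ (-((((d : ℝ) - (k : ℝ)) * (k : ℝ)) / 4))
      * (∏ i ∈ Finset.range d, a i) ^ ((k : ℝ) / (d : ℝ)) := by
    have h1 : 0 < α ^ (-((((d : ℝ) - (k : ℝ)) * (k : ℝ)) / 4)) := Real.rpow_pos_of_pos hα0 _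
    have h2 : 0 < (∏ i ∈ Finset.range d, a i) ^ ((k : ℝ) / (d : ℝ)) := Real.rpow_pos_of_pos hP _
    exact mul_pos h1 h2
  rw [← Real.log_le_log_iff hP1 hRHS]
  rw [Real.log_mul (Real.rpow_pos_of_pos hα0 _).ne' (Real.rpow_pos_of_pos hP _).ne',
    Real.log_rpow hα0, Real.log_rpow hP,
    Real.log_prod (fun i _ => hne i), Real.log_prod (fun i _ => hne i), hS]
  rw [← hS1, ← hL]
  linarith [main]
end

section
/- Let m ≥ 2 and define the linear operator Δ : ℝ^m → ℝ^m by (Δu)_j = (u_{j−1} + 2u_j + u_{j+1})/4 for 2 ≤ j ≤ m−1, (Δu)_1 = (u_1 + u_2)/4, and (Δu)_m = (u_{m−1} + u_m)/4. Then: (i) for every 1 ≤ k ≤ m, the vector s⁽ᵏ⁾ ∈ ℝ^m with coordinates s⁽ᵏ⁾_j = sin((2j−1)kπ/(2m)) satisfies Δ s⁽ᵏ⁾ = cos²(kπ/(2m)) · s⁽ᵏ⁾; (ii) the vectors s⁽¹⁾, …, s⁽ᵐ⁾ are pairwise orthogonal for the standard inner product; (iii) consequently, for every u ∈ ℝ^m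 and every integer t ≥ 0, ‖Δᵗ u‖₂ ≤ cos(π/(2m))^{2t} · ‖u‖₂ ≤ exp(−π²t/(4m²)) · ‖u‖₂. -/
open Real

lemma aux_cos_le_exp {x : ℝ} (hx0 : 0 ≤ x) (hx : x ≤ 4/5) :
    Real.cos x ≤ Real.exp (-(x^2/2)) := by
  have hx1 : |x| ≤ 1 := by rw [abs_of_nonneg hx0]; linarith
  have hcos := Real.cos_bound hx1
  have hy1 : |(-(x^2/2))| ≤ 1 := by
    rw [abs_neg, abs_of_nonneg (by positivity)]; nlinarith
  have hexp := Real.exp_bound hy1 (n := 4) (by norm_num)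
  rw [abs_of_nonneg hx0] at hcos
  rw [abs_neg, abs_of_nonneg (show (0:ℝ) ≤ x^2/2 by positivity)] at hexp
  rw [Finset.sum_range_succ, Finset.sum_range_succ, Finset.sum_range_succ,
    Finset.sum_range_succ, Finset.sum_range_zero] at hexp
  norm_num [Nat.factorial] at hexp
  rw [abs_le] at hcos hexp
  have hx2 : x^2 ≤ 16/25 := by nlinarith
  nlinarith [hcos.1, hcos.2, hexp.1, hexp.2, sq_nonneg x, pow_nonneg hx0 4,
    pow_nonneg hx0 6, pow_nonneg hx0 8]

lemma aux_cos_sum (m : ℕ) (c : ℝ) (hc : Real.sin c ≠ 0)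
    (hc2 : Real.sin (2 * m * c) = 0) :
    ∑ j ∈ Finset.range m, Real.cos ((2 * j + 1) * c) = 0 := by
  have key : ∀ j : ℕ, Real.cos ((2 * (j:ℝ) + 1) * c) * (2 * Real.sin c)
      = Real.sin (2 * ((j:ℝ)+1) * c) - Real.sin (2 * (j:ℝ) * c) := by
    intro j
    have h1 : 2 * ((j:ℝ)+1) * c = (2*(j:ℝ)+1)*c + c := by ring
    have h2 : 2 * (j:ℝ) * c = (2*(j:ℝ)+1)*c - c := by ring
    rw [h1, h2, Real.sin_add, Real.sin_sub]; ring
  have hsum : (∑ j ∈ Finset.range m, Real.cos ((2 * j + 1) * c)) * (2 * Real.sin c)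
      = ∑ j ∈ Finset.range m, (Real.sin (2 * ((j:ℝ)+1) * c) - Real.sin (2 * (j:ℝ) * c)) := by
    rw [Finset.sum_mul]
    exact Finset.sum_congr rfl fun j _ => key j
  have htel : ∑ j ∈ Finset.range m, (Real.sin (2 * ((j:ℝ)+1) * c) - Real.sin (2 * (j:ℝ) * c))
      = Real.sin (2 * m * c) - Real.sin (2 * (0:ℝ) * c) := by
    have := Finset.sum_range_sub (fun j : ℕ => Real.sin (2 * (j:ℝ) * c)) m
    simpa [Nat.cast_add] using this
  rw [htel, hc2] at hsum
  simp at hsum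
  rcases hsum with h | h
  · exact h
  · exact absurd h hc

lemma aux_orth (m k l : ℕ) (hm : 2 ≤ m) (hk1 : 1 ≤ k) (hk2 : k ≤ m)
    (hl1 : 1 ≤ l) (hl2 : l ≤ m) (hkl : k ≠ l) :
    ∑ j ∈ Finset.range m, Real.sin ((2 * (j:ℝ) + 1) * k * π / (2 * m)) *
      Real.sin ((2 * (j:ℝ) + 1) * l * π / (2 * m)) = 0 := by
  have hm0 : (0:ℝ) < m := by positivity
  set a : ℝ := k * π / (2 * m) with ha
  set b : ℝ := l * π / (2 * m) with hb
  have hpi := Real.pi_pos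
  have hak : 0 < a := by positivity
  have hbk : 0 < b := by positivity
  have hkm : (k:ℝ) ≤ m := Nat.cast_le.2 hk2
  have hlm : (l:ℝ) ≤ m := Nat.cast_le.2 hl2
  have ham : a ≤ π / 2 := by
    rw [ha, div_le_div_iff₀ (by positivity) (by norm_num)]; nlinarith
  have hbm : b ≤ π / 2 := by
    rw [hb, div_le_div_iff₀ (by positivity) (by norm_num)]; nlinarith
  have hprod : ∀ j : ℕ, Real.sin ((2 * (j:ℝ) + 1) * k * π / (2 * m)) *
      Real.sin ((2 * (j:ℝ) + 1) * l * π / (2 * m))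
      = (Real.cos ((2 * (j:ℝ) + 1) * (a - b)) - Real.cos ((2 * (j:ℝ) + 1) * (a + b))) / 2 := by
    intro j
    have e1 : (2 * (j:ℝ) + 1) * k * π / (2 * m) = (2 * (j:ℝ) + 1) * a := by
      rw [ha]; ring
    have e2 : (2 * (j:ℝ) + 1) * l * π / (2 * m) = (2 * (j:ℝ) + 1) * b := by
      rw [hb]; ring
    have e3 : (2 * (j:ℝ) + 1) * (a - b) = (2 * (j:ℝ) + 1) * a - (2 * (j:ℝ) + 1) * b := by ring
    have e4 : (2 * (j:ℝ) + 1) * (a + b) = (2 * (j:ℝ) + 1) * a + (2 * (j:ℝ) + 1) * b := by ring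
    rw [e1, e2, e3, e4, Real.cos_sub, Real.cos_add]; ring
  rw [Finset.sum_congr rfl fun j _ => hprod j]
  have hne : π / (2 * (m:ℝ)) ≠ 0 := by positivity
  have hsub : ∑ j ∈ Finset.range m, Real.cos ((2 * (j:ℝ) + 1) * (a - b)) = 0 := by
    refine aux_cos_sum m _ ?_ ?_
    · rw [ne_eq, Real.sin_eq_zero_iff_of_lt_of_lt (by linarith) (by linarith)]
      intro h
      have hab : a = b := by linarith
      have h2 : (k:ℝ) * (π / (2 * (m:ℝ))) = (l:ℝ) * (π / (2 * (m:ℝ))) := by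
        rw [ha, hb] at hab
        calc (k:ℝ) * (π / (2 * (m:ℝ))) = (k:ℝ) * π / (2 * m) := by ring
        _ = (l:ℝ) * π / (2 * m) := hab
        _ = (l:ℝ) * (π / (2 * (m:ℝ))) := by ring
      have : (k:ℝ) = l := mul_right_cancel₀ hne h2
      exact hkl (Nat.cast_injective this)
    · have h2m : (2 * (m:ℝ)) ≠ 0 := by positivity
      have : 2 * (m:ℝ) * (a - b) = ((((k:ℤ) - (l:ℤ)) : ℤ) : ℝ) * π := by
        calc 2 * (m:ℝ) * (a - b) = ((k:ℝ) * π - l * π) / (2 * m) * (2 * m) := by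
              rw [ha, hb]; ring
          _ = (k:ℝ) * π - l * π := div_mul_cancel₀ _ h2m
          _ = ((((k:ℤ) - (l:ℤ)) : ℤ) : ℝ) * π := by push_cast; ring
      rw [this]; exact Real.sin_int_mul_pi _
  have hadd : ∑ j ∈ Finset.range m, Real.cos ((2 * (j:ℝ) + 1) * (a + b)) = 0 := by
    refine aux_cos_sum m _ ?_ ?_
    · have h1 : 0 < a + b := by linarith
      have hklm : (k:ℝ) + l ≤ 2 * m - 1 := by
        have h' : k + l + 1 ≤ 2 * m := by omega
        have := (Nat.cast_le (α := ℝ)).2 h'; push_cast at this; linarith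
      have h2 : a + b < π := by
        rw [ha, hb, ← add_div, div_lt_iff₀ (by positivity)]
        nlinarith
      exact ne_of_gt (Real.sin_pos_of_pos_of_lt_pi h1 h2)
    · have h2m : (2 * (m:ℝ)) ≠ 0 := by positivity
      have : 2 * (m:ℝ) * (a + b) = ((((k:ℤ) + (l:ℤ)) : ℤ) : ℝ) * π := by
        calc 2 * (m:ℝ) * (a + b) = ((k:ℝ) * π + l * π) / (2 * m) * (2 * m) := by
              rw [ha, hb]; ring
          _ = (k:ℝ) * π + l * π := div_mul_cancel₀ _ h2m
          _ = ((((k:ℤ) + (l:ℤ)) : ℤ) : ℝ) * π := by push_cast; ring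
      rw [this]; exact Real.sin_int_mul_pi _
  rw [← Finset.sum_div, Finset.sum_sub_distrib, hsub, hadd]
  norm_num

lemma aux_eig_left (x y θ : ℝ) (hx : x = θ) (hy : y = 3 * θ) :
    (Real.sin x + Real.sin y) / 4 = Real.cos θ ^ 2 * Real.sin x := by
  rw [hx, hy]
  rw [Real.sin_three_mul]
  linear_combination (- Real.sin θ) * (Real.sin_sq_add_cos_sq θ)

lemma aux_eig_mid (x xm xp θ : ℝ) (hm : xm = x - 2 * θ) (hp : xp = x + 2 * θ) :
    (Real.sin xm + 2 * Real.sin x + Real.sin xp) / 4 = Real.cos θ ^ 2 * Real.sin x := by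
  rw [hm, hp]
  rw [Real.sin_sub, Real.sin_add, Real.cos_two_mul]
  ring

lemma aux_eig_right (k : ℕ) (x xm θ : ℝ) (hx : x = k * π - θ) (hm : xm = k * π - 3 * θ) :
    (Real.sin xm + Real.sin x) / 4 = Real.cos θ ^ 2 * Real.sin x := by
  rw [hx, hm]
  rw [Real.sin_sub, Real.sin_sub, Real.sin_nat_mul_pi, Real.sin_three_mul]
  linear_combination (Real.cos (k * π) * Real.sin θ) * (Real.sin_sq_add_cos_sq θ)

lemma aux_sq_le (r a d : ℝ) (h0 : 0 ≤ a) (h1 : a ≤ d) : (r * a) ^ 2 ≤ d ^ 2 * r ^ 2 := by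
  nlinarith [sq_nonneg r, mul_nonneg (mul_nonneg (sub_nonneg.2 h1)
    (by linarith : (0:ℝ) ≤ d + a)) (sq_nonneg r)]

set_option maxHeartbeats 2000000 in
/-- Spectral analysis of the averaging (discrete Laplacian-like) step operator `Δ` on `ℝ^m`:
(i) the vectors `s⁽ᵏ⁾_j = sin((2j−1)kπ/(2m))` are eigenvectors with eigenvalue
`cos²(kπ/(2m))`; (ii) they are pairwise orthogonal; (iii) consequently iterating `Δ`
contracts the Euclidean norm exponentially fast. -/
theorem step_operator_spectral_decay (m : ℕ) (hm : 2 ≤ m)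
    (Δ : EuclideanSpace ℝ (Fin m) → EuclideanSpace ℝ (Fin m))
    (hΔ0 : ∀ u : EuclideanSpace ℝ (Fin m),
      Δ u ⟨0, by omega⟩ = (u ⟨0, by omega⟩ + u ⟨1, by omega⟩) / 4)
    (hΔlast : ∀ u : EuclideanSpace ℝ (Fin m),
      Δ u ⟨m - 1, by omega⟩ = (u ⟨m - 2, by omega⟩ + u ⟨m - 1, by omega⟩) / 4)
    (hΔmid : ∀ (u : EuclideanSpace ℝ (Fin m)) (j : Fin m)
      (h1 : 0 < (j : ℕ)) (h2 : (j : ℕ) < m - 1),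
      Δ u j = (u ⟨(j : ℕ) - 1, by omega⟩ + 2 * u j + u ⟨(j : ℕ) + 1, by omega⟩) / 4)
    (s : ℕ → EuclideanSpace ℝ (Fin m))
    (hs : ∀ (k : ℕ) (j : Fin m),
      s k j = Real.sin ((2 * (j : ℝ) + 1) * (k : ℝ) * Real.pi / (2 * m))) :
    (∀ k : ℕ, 1 ≤ k → k ≤ m →
      Δ (s k) = Real.cos ((k : ℝ) * Real.pi / (2 * m)) ^ 2 • s k) ∧
    (∀ k l : ℕ, 1 ≤ k → k ≤ m → 1 ≤ l → l ≤ m → k ≠ l →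
      (inner ℝ (s k) (s l) : ℝ) = 0) ∧
    (∀ (u : EuclideanSpace ℝ (Fin m)) (t : ℕ),
      ‖Δ^[t] u‖ ≤ Real.cos (Real.pi / (2 * m)) ^ (2 * t) * ‖u‖ ∧
      Real.cos (Real.pi / (2 * m)) ^ (2 * t) * ‖u‖ ≤
        Real.exp (-(Real.pi ^ 2 * (t : ℝ)) / (4 * (m : ℝ) ^ 2)) * ‖u‖) := by
  have hm0 : (0:ℝ) < m := by positivity
  have hpi := Real.pi_pos
  -- Part (i)
  have part1 : ∀ k : ℕ, 1 ≤ k → k ≤ m →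
      Δ (s k) = Real.cos ((k : ℝ) * Real.pi / (2 * m)) ^ 2 • s k := by
    intro k hk1 hk2
    ext j
    have hjlt : (j:ℕ) < m := j.isLt
    have hsmul : (Real.cos ((k : ℝ) * Real.pi / (2 * m)) ^ 2 • s k) j
        = Real.cos ((k : ℝ) * Real.pi / (2 * m)) ^ 2 * s k j := rfl
    rw [hsmul]
    by_cases h0 : (j:ℕ) = 0
    · have hj : j = ⟨0, by omega⟩ := Fin.ext h0
      rw [hj, hΔ0]; simp only [hs]
      refine aux_eig_left _ _ _ ?_ ?_ <;> · push_cast; ring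
    · by_cases hl : (j:ℕ) = m - 1
      · have hj : j = ⟨m - 1, by omega⟩ := Fin.ext hl
        rw [hj, hΔlast]; simp only [hs]
        refine aux_eig_right k _ _ _ ?_ ?_
        · push_cast [Nat.cast_sub (show 1 ≤ m by omega)]
          field_simp
          ring
        · push_cast [Nat.cast_sub (show 2 ≤ m by omega)]
          field_simp
          ring
      · have h1 : 0 < (j:ℕ) := by omega
        have h2 : (j:ℕ) < m - 1 := by omega
        rw [hΔmid (s k) j h1 h2]; simp only [hs]
        refine aux_eig_mid _ _ _ _ ?_ ?_
        · push_cast [Nat.cast_sub (show 1 ≤ (j:ℕ) by omega)]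
          field_simp
          ring
        · push_cast; field_simp; ring
  -- Part (ii)
  have part2 : ∀ k l : ℕ, 1 ≤ k → k ≤ m → 1 ≤ l → l ≤ m → k ≠ l →
      (inner ℝ (s k) (s l) : ℝ) = 0 := by
    intro k l hk1 hk2 hl1 hl2 hkl
    rw [PiLp.inner_apply]
    simp only [RCLike.inner_apply, starRingEnd_apply, star_trivial]
    have : ∀ j : Fin m, s k j * s l j
        = Real.sin ((2 * ((j:ℕ):ℝ) + 1) * k * π / (2 * m)) *
          Real.sin ((2 * ((j:ℕ):ℝ) + 1) * l * π / (2 * m)) := by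
      intro j; rw [hs, hs]
    rw [Finset.sum_congr rfl fun j _ => (mul_comm _ _).trans (this j)]
    rw [Fin.sum_univ_eq_sum_range (fun j => Real.sin ((2 * (j:ℝ) + 1) * k * π / (2 * m)) *
      Real.sin ((2 * (j:ℝ) + 1) * l * π / (2 * m)))]
    exact aux_orth m k l hm hk1 hk2 hl1 hl2 hkl
  refine ⟨part1, part2, ?_⟩
  have hm' : (2:ℝ) ≤ m := by exact_mod_cast hm
  -- explicit formula for Δ
  have hΔeq : ∀ (u : EuclideanSpace ℝ (Fin m)) (j : Fin m), Δ u j =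
      (if h0 : (j:ℕ) = 0 then (u ⟨0, by omega⟩ + u ⟨1, by omega⟩) / 4
       else if hl : (j:ℕ) = m - 1 then (u ⟨m - 2, by omega⟩ + u ⟨m - 1, by omega⟩) / 4
       else (u ⟨(j:ℕ) - 1, by omega⟩ + 2 * u j + u ⟨(j:ℕ) + 1, by omega⟩) / 4) := by
    intro u j
    rcases j with ⟨jv, hjv⟩
    by_cases h0 : jv = 0
    · subst h0
      rw [dif_pos rfl]
      exact hΔ0 u
    · rw [dif_neg h0]
      by_cases hl : jv = m - 1
      · subst hl
        rw [dif_pos rfl]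
        exact hΔlast u
      · rw [dif_neg hl]
        exact hΔmid u ⟨jv, hjv⟩ (show 0 < jv by omega) (show jv < m - 1 by omega)
  -- Δ is linear
  have hadd : ∀ u v, Δ (u + v) = Δ u + Δ v := by
    intro u v
    ext j
    have h1 : (Δ u + Δ v) j = Δ u j + Δ v j := rfl
    have h2 : ∀ (i : Fin m), (u + v) i = u i + v i := fun i => rfl
    rw [h1, hΔeq, hΔeq, hΔeq]
    split_ifs <;> simp only [h2] <;> ring
  have hsmulΔ : ∀ (c : ℝ) u, Δ (c • u) = c • Δ u := by
    intro c u
    ext j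
    have h1 : (c • Δ u) j = c * Δ u j := rfl
    have h2 : ∀ (i : Fin m), (c • u) i = c * u i := fun i => rfl
    rw [h1, hΔeq, hΔeq]
    split_ifs <;> simp only [h2] <;> ring
  let L : EuclideanSpace ℝ (Fin m) →ₗ[ℝ] EuclideanSpace ℝ (Fin m) :=
    { toFun := Δ, map_add' := hadd, map_smul' := hsmulΔ }
  have hLΔ : ∀ u, L u = Δ u := fun u => rfl
  set c : ℝ := Real.cos (π / (2 * m)) with hc
  have hcpos : 0 ≤ c := by
    rw [hc]
    apply Real.cos_nonneg_of_mem_Icc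
    constructor
    · have : (0:ℝ) ≤ π / (2 * m) := by positivity
      linarith
    · rw [div_le_div_iff₀ (by positivity) (by norm_num)]
      nlinarith
  -- the normalized eigenvectors
  have hsne : ∀ i : Fin m, s ((i:ℕ) + 1) ≠ 0 := by
    intro i hzero
    have h1 : s ((i:ℕ)+1) ⟨0, by omega⟩ = 0 := by rw [hzero]; rfl
    rw [hs] at h1
    have hi : ((i:ℕ):ℝ) + 1 ≤ m := by
      have : ((((i:ℕ) + 1 : ℕ)):ℝ) ≤ m := Nat.cast_le.2 (by omega)
      push_cast at this; linarith
    have harg : 0 < (2 * ((((⟨0, by omega⟩ : Fin m)):ℕ):ℝ) + 1) * (((i:ℕ)+1:ℕ):ℝ) * π / (2 * m) := by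
      push_cast
      positivity
    have harg2 : (2 * ((((⟨0, by omega⟩ : Fin m)):ℕ):ℝ) + 1) * (((i:ℕ)+1:ℕ):ℝ) * π / (2 * m) < π := by
      push_cast
      rw [div_lt_iff₀ (by positivity)]
      nlinarith
    exact absurd h1 (ne_of_gt (Real.sin_pos_of_pos_of_lt_pi harg harg2))
  let f : Fin m → EuclideanSpace ℝ (Fin m) := fun i => ‖s ((i:ℕ) + 1)‖⁻¹ • s ((i:ℕ) + 1)
  have hnormne : ∀ i : Fin m, ‖s ((i:ℕ) + 1)‖ ≠ 0 := fun i => norm_ne_zero_iff.2 (hsne i)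
  have honf : Orthonormal ℝ f := by
    rw [orthonormal_iff_ite]
    intro i j
    by_cases hij : i = j
    · subst hij
      rw [if_pos rfl]
      have key : (inner ℝ (f i) (f i) : ℝ)
          = ‖s ((i:ℕ)+1)‖⁻¹ * (‖s ((i:ℕ)+1)‖⁻¹ * (inner ℝ (s ((i:ℕ)+1)) (s ((i:ℕ)+1)) : ℝ)) := by
        show (inner ℝ (‖s ((i:ℕ)+1)‖⁻¹ • s ((i:ℕ)+1)) (‖s ((i:ℕ)+1)‖⁻¹ • s ((i:ℕ)+1)) : ℝ) = _
        rw [real_inner_smul_left, real_inner_smul_right]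
      rw [key, real_inner_self_eq_norm_sq, sq]
      field_simp
      rw [div_self (hnormne i)]
    · rw [if_neg hij]
      have key : (inner ℝ (f i) (f j) : ℝ)
          = ‖s ((i:ℕ)+1)‖⁻¹ * (‖s ((j:ℕ)+1)‖⁻¹ * (inner ℝ (s ((i:ℕ)+1)) (s ((j:ℕ)+1)) : ℝ)) := by
        show (inner ℝ (‖s ((i:ℕ)+1)‖⁻¹ • s ((i:ℕ)+1)) (‖s ((j:ℕ)+1)‖⁻¹ • s ((j:ℕ)+1)) : ℝ) = _
        rw [real_inner_smul_left, real_inner_smul_right]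
      rw [key, part2 ((i:ℕ)+1) ((j:ℕ)+1) (by omega) (by omega) (by omega) (by omega)
        (fun h => hij (Fin.ext (by omega)))]
      ring
  haveI : Nonempty (Fin m) := ⟨⟨0, by omega⟩⟩
  have hcard : Fintype.card (Fin m) = Module.finrank ℝ (EuclideanSpace ℝ (Fin m)) := by
    simp
  have hbex : ∃ b : OrthonormalBasis (Fin m) ℝ (EuclideanSpace ℝ (Fin m)), ⇑b = f := by
    let b0 := basisOfLinearIndependentOfCardEqFinrank honf.linearIndependent hcard
    have hb0 : ⇑b0 = f := coe_basisOfLinearIndependentOfCardEqFinrank _ _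
    exact ⟨b0.toOrthonormalBasis (by rwa [hb0]), by rw [Module.Basis.coe_toOrthonormalBasis, hb0]⟩
  obtain ⟨b, hbf⟩ := hbex
  -- eigenvalues
  let lam : Fin m → ℝ := fun i => Real.cos ((((i:ℕ):ℝ)+1) * π / (2 * m)) ^ 2
  have hLf : ∀ i, L (f i) = lam i • f i := by
    intro i
    show L (‖s ((i:ℕ) + 1)‖⁻¹ • s ((i:ℕ) + 1)) = lam i • f i
    rw [map_smul, hLΔ, part1 ((i:ℕ)+1) (by omega) (by omega)]
    have he : ((((i:ℕ)+1 : ℕ)):ℝ) = ((i:ℕ):ℝ) + 1 := by push_cast; ring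
    rw [he, smul_comm]
  have hlam0 : ∀ i, 0 ≤ lam i := fun i => sq_nonneg _
  have hlamle : ∀ i, lam i ≤ c ^ 2 := by
    intro i
    have hi : ((i:ℕ):ℝ) + 1 ≤ m := by
      have : ((((i:ℕ) + 1 : ℕ)):ℝ) ≤ m := Nat.cast_le.2 (by omega)
      push_cast at this; linarith
    have h1 : (0:ℝ) ≤ π / (2 * m) := by positivity
    have h2 : π / (2 * m) ≤ ((((i:ℕ):ℝ)+1)) * π / (2 * m) := by
      apply div_le_div_of_nonneg_right ?_ (by positivity)
      nlinarith
    have h3 : ((((i:ℕ):ℝ)+1)) * π / (2 * m) ≤ π := by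
      rw [div_le_iff₀ (by positivity)]
      nlinarith
    have h4 : 0 ≤ Real.cos (((((i:ℕ):ℝ)+1)) * π / (2 * m)) := by
      apply Real.cos_nonneg_of_mem_Icc
      constructor
      · linarith
      · rw [div_le_div_iff₀ (by positivity) (by norm_num)]
        nlinarith
    have h5 : Real.cos (((((i:ℕ):ℝ)+1)) * π / (2 * m)) ≤ c := by
      rw [hc]
      exact Real.cos_le_cos_of_nonneg_of_le_pi h1 h3 h2
    exact pow_le_pow_left₀ h4 h5 2
  -- single-step contraction
  have hnormsq : ∀ (w : EuclideanSpace ℝ (Fin m)), ‖w‖ ^ 2 = ∑ i, (w i) ^ 2 := by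
    intro w
    rw [← real_inner_self_eq_norm_sq, PiLp.inner_apply]
    simp [RCLike.inner_apply, sq]
  have hstep : ∀ v, ‖Δ v‖ ≤ c ^ 2 * ‖v‖ := by
    intro v
    have hv : v = ∑ i, b.repr v i • f i := by
      conv_lhs => rw [← b.sum_repr v]
      exact Finset.sum_congr rfl fun i _ => by rw [hbf]
    have hLv : L v = ∑ i, (b.repr v i * lam i) • f i := by
      conv_lhs => rw [hv]
      rw [map_sum]
      refine Finset.sum_congr rfl fun i _ => ?_
      rw [map_smul, hLf i, smul_smul]
    have hite := orthonormal_iff_ite.1 honf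
    have hrep : ∀ i, b.repr (L v) i = b.repr v i * lam i := by
      intro i
      have hri : b.repr (L v) i = (inner ℝ (b i) (L v) : ℝ) := b.repr_apply_apply (L v) i
      rw [hri, hbf, hLv, inner_sum]
      simp only [real_inner_smul_right, hite, mul_ite, mul_one, mul_zero]
      rw [Finset.sum_ite_eq]
      simp
    have h1 : ‖L v‖ ^ 2 = ∑ i, (b.repr v i * lam i) ^ 2 := by
      rw [← b.repr.norm_map (L v), hnormsq]
      exact Finset.sum_congr rfl fun i _ => by rw [hrep i]
    have h2 : ‖v‖ ^ 2 = ∑ i, (b.repr v i) ^ 2 := by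
      rw [← b.repr.norm_map v, hnormsq]
    have h3 : ‖L v‖ ^ 2 ≤ (c ^ 2) ^ 2 * ‖v‖ ^ 2 := by
      rw [h1, h2, Finset.mul_sum]
      refine Finset.sum_le_sum fun i _ => ?_
      exact aux_sq_le _ _ _ (hlam0 i) (hlamle i)
    have h4 : (0:ℝ) ≤ c ^ 2 * ‖v‖ := by positivity
    calc ‖Δ v‖ = Real.sqrt (‖L v‖ ^ 2) := by rw [Real.sqrt_sq (norm_nonneg _), hLΔ]
      _ ≤ Real.sqrt ((c ^ 2) ^ 2 * ‖v‖ ^ 2) := Real.sqrt_le_sqrt h3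
      _ = c ^ 2 * ‖v‖ := by
          rw [show (c^2)^2 * ‖v‖^2 = (c^2 * ‖v‖)^2 by ring, Real.sqrt_sq h4]
  -- iterate
  intro u t
  constructor
  · have hiter : ∀ (t : ℕ) (u : EuclideanSpace ℝ (Fin m)), ‖Δ^[t] u‖ ≤ (c ^ 2) ^ t * ‖u‖ := by
      intro t
      induction t with
      | zero => intro u; simp
      | succ n ih =>
        intro u
        rw [Function.iterate_succ_apply']
        calc ‖Δ (Δ^[n] u)‖ ≤ c ^ 2 * ‖Δ^[n] u‖ := hstep _
          _ ≤ c ^ 2 * ((c ^ 2) ^ n * ‖u‖) := by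
              apply mul_le_mul_of_nonneg_left (ih u) (sq_nonneg c)
          _ = (c ^ 2) ^ (n + 1) * ‖u‖ := by ring
    have := hiter t u
    rwa [pow_mul]
  · have hple : π / (2 * m) ≤ 4/5 := by
      have h315 : π < 3.15 := Real.pi_lt_d2
      rw [div_le_iff₀ (by positivity)]
      nlinarith
    have hkey : c ≤ Real.exp (-((π / (2 * m)) ^ 2 / 2)) :=
      aux_cos_le_exp (by positivity) hple
    have h1 : c ^ (2 * t) ≤ (Real.exp (-((π / (2 * m)) ^ 2 / 2))) ^ (2 * t) :=
      pow_le_pow_left₀ hcpos hkey _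
    have h2 : (Real.exp (-((π / (2 * m)) ^ 2 / 2))) ^ (2 * t)
        = Real.exp (-(π ^ 2 * (t : ℝ)) / (4 * (m : ℝ) ^ 2)) := by
      rw [← Real.exp_nat_mul]
      congr 1
      push_cast
      field_simp
      ring
    apply mul_le_mul_of_nonneg_right _ (norm_nonneg u)
    rw [← h2]
    exact h1
end

section
/- Let f ≥ 1 be an integer and let x ∈ ℂ satisfy |x| ≥ 1 − 1/(2f). Set x' = x − (x^f − 1)/(f·x^{f−1}). Then for every ζ ∈ ℂ with ζ^f = 1 one has |x' − ζ| ≤ f·|x − ζ|². -/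
open Finset

/-- Quadratic convergence of Newton's iteration for `X ^ f - 1`. -/
theorem newton_step_root_of_unity (f : ℕ) (hf : 1 ≤ f) (x : ℂ)
    (hx : 1 - 1 / (2 * f) ≤ ‖x‖) (ζ : ℂ) (hζ : ζ ^ f = 1) :
    ‖x - (x ^ f - 1) / (f * x ^ (f - 1)) - ζ‖ ≤ f * ‖x - ζ‖ ^ 2 := by
  have hf0 : (0:ℝ) < f := by exact_mod_cast hf
  have hfr : ((f - 1 : ℕ) : ℝ) = (f : ℝ) - 1 := by
    have : (1:ℕ) ≤ f := hf
    push_cast [this]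
    ring
  have hhalf : (0:ℝ) < 1 - 1 / (2 * f) := by
    have h1 : (1:ℝ) / (2 * f) ≤ 1 / 2 := by
      rw [div_le_div_iff₀ (by positivity) (by norm_num)]
      linarith
    linarith
  set a := ‖x‖ with ha
  have ha0 : (0:ℝ) < a := lt_of_lt_of_le hhalf hx
  have hx0 : x ≠ 0 := by
    intro h
    rw [h] at ha
    simp [ha] at ha0
  have hd : (f : ℂ) * x ^ (f - 1) ≠ 0 := by
    apply mul_ne_zero
    · exact_mod_cast Nat.cast_ne_zero.mpr (by omega)
    · exact pow_ne_zero _ hx0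
  have hzeta : ‖ζ‖ = 1 := by
    have := Complex.norm_eq_one_of_pow_eq_one hζ (by omega)
    simpa using this
  -- the double geometric sum
  set S : ℂ := ∑ k ∈ range f, x ^ k * ∑ i ∈ range (f - 1 - k), x ^ i * ζ ^ (f - 1 - k - 1 - i)
    with hS
  -- key algebraic identity
  have h1 : (x - ζ) * S = (f : ℂ) * x ^ (f - 1) - ∑ k ∈ range f, x ^ k * ζ ^ (f - 1 - k) := by
    rw [hS, Finset.mul_sum]
    have : ∀ k ∈ range f,
        (x - ζ) * (x ^ k * ∑ i ∈ range (f - 1 - k), x ^ i * ζ ^ (f - 1 - k - 1 - i))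
          = x ^ (f - 1) - x ^ k * ζ ^ (f - 1 - k) := by
      intro k hk
      have hgk := geom_sum₂_mul x ζ (f - 1 - k)
      have hkf : k + (f - 1 - k) = f - 1 := by
        have := mem_range.mp hk; omega
      calc (x - ζ) * (x ^ k * ∑ i ∈ range (f - 1 - k), x ^ i * ζ ^ (f - 1 - k - 1 - i))
          = x ^ k * ((∑ i ∈ range (f - 1 - k), x ^ i * ζ ^ (f - 1 - k - 1 - i)) * (x - ζ)) := by
            ring
        _ = x ^ k * (x ^ (f - 1 - k) - ζ ^ (f - 1 - k)) := by rw [hgk]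
        _ = x ^ (k + (f - 1 - k)) - x ^ k * ζ ^ (f - 1 - k) := by rw [pow_add]; ring
        _ = x ^ (f - 1) - x ^ k * ζ ^ (f - 1 - k) := by rw [hkf]
    rw [Finset.sum_congr rfl this, Finset.sum_sub_distrib, Finset.sum_const, card_range,
      nsmul_eq_mul]
  have hkey : (x - ζ) ^ 2 * S = (x - ζ) * ((f : ℂ) * x ^ (f - 1)) - (x ^ f - 1) := by
    have h2 := geom_sum₂_mul x ζ f
    calc (x - ζ) ^ 2 * S = (x - ζ) * ((x - ζ) * S) := by ring
      _ = (x - ζ) * ((f : ℂ) * x ^ (f - 1))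
            - (∑ k ∈ range f, x ^ k * ζ ^ (f - 1 - k)) * (x - ζ) := by rw [h1]; ring
      _ = (x - ζ) * ((f : ℂ) * x ^ (f - 1)) - (x ^ f - ζ ^ f) := by rw [h2]
      _ = (x - ζ) * ((f : ℂ) * x ^ (f - 1)) - (x ^ f - 1) := by rw [hζ]
  have hrw : x - (x ^ f - 1) / (↑f * x ^ (f - 1)) - ζ
      = (x - ζ) ^ 2 * S / (↑f * x ^ (f - 1)) := by
    rw [eq_div_iff hd, hkey]
    have hfc : (f:ℂ) ≠ 0 := by exact_mod_cast hf0.ne'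
    field_simp
    ring
  -- bound on S
  set M := max 1 a with hM
  have hM1 : (1:ℝ) ≤ M := le_max_left _ _
  have hMa : a ≤ M := le_max_right _ _
  have hterm : ∀ j, j ≤ f - 1 → a ^ j ≤ M ^ (f - 1) := by
    intro j hj
    calc a ^ j ≤ M ^ j := pow_le_pow_left₀ ha0.le hMa j
      _ ≤ M ^ (f - 1) := pow_le_pow_right₀ hM1 hj
  have hSb : ‖S‖ ≤ (∑ k ∈ range f, (f - 1 - k : ℕ)) * M ^ (f - 1) := by
    calc ‖S‖ ≤ ∑ k ∈ range f,
        ‖x ^ k * ∑ i ∈ range (f - 1 - k), x ^ i * ζ ^ (f - 1 - k - 1 - i)‖ :=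
          norm_sum_le _ _
      _ ≤ ∑ k ∈ range f, (f - 1 - k : ℕ) * M ^ (f - 1) := by
          apply Finset.sum_le_sum
          intro k hk
          rw [norm_mul, norm_pow]
          calc a ^ k * ‖∑ i ∈ range (f - 1 - k), x ^ i * ζ ^ (f - 1 - k - 1 - i)‖
              ≤ a ^ k * ∑ i ∈ range (f - 1 - k), ‖x ^ i * ζ ^ (f - 1 - k - 1 - i)‖ := by
                apply mul_le_mul_of_nonneg_left (norm_sum_le _ _) (by positivity)
            _ = ∑ i ∈ range (f - 1 - k), a ^ (k + i) := by
                rw [Finset.mul_sum]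
                apply Finset.sum_congr rfl
                intro i _
                rw [norm_mul, norm_pow, norm_pow, hzeta, one_pow, mul_one, pow_add]
            _ ≤ ∑ i ∈ range (f - 1 - k), M ^ (f - 1) := by
                apply Finset.sum_le_sum
                intro i hi
                have hik : k + i ≤ f - 1 := by
                  have := mem_range.mp hi; have := mem_range.mp hk; omega
                exact hterm _ hik
            _ = (f - 1 - k : ℕ) * M ^ (f - 1) := by
                rw [Finset.sum_const, card_range, nsmul_eq_mul]
      _ = (∑ k ∈ range f, (f - 1 - k : ℕ)) * M ^ (f - 1) := by
          rw [← Finset.sum_mul, Nat.cast_sum]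
  have hcount : (2:ℝ) * (∑ k ∈ range f, (f - 1 - k : ℕ) : ℕ) = (f : ℝ) * ((f : ℝ) - 1) := by
    have h1 : ∑ k ∈ range f, (f - 1 - k) = ∑ k ∈ range f, k :=
      Finset.sum_range_reflect (fun j => j) f
    have h2 := Finset.sum_range_id_mul_two f
    have : (2:ℝ) * (∑ k ∈ range f, (k:ℕ) : ℕ) = ((f * (f-1) : ℕ) : ℝ) := by
      rw [mul_comm]
      exact_mod_cast congrArg (Nat.cast : ℕ → ℝ) h2
    rw [h1, this]
    push_cast [Nat.cast_sub hf]
    ring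
  -- the quantitative bound on the sum
  have hSfin : ‖S‖ ≤ (f : ℝ) ^ 2 * a ^ (f - 1) := by
    refine hSb.trans ?_
    rcases le_or_gt 1 a with h1a | h1a
    · have hMe : M = a := max_eq_right h1a
      rw [hMe]
      have hap : (0:ℝ) < a ^ (f - 1) := by positivity
      nlinarith [hcount]
    · have hMe : M = 1 := max_eq_left h1a.le
      rw [hMe, one_pow, mul_one]
      -- Bernoulli
      have hb := one_add_mul_le_pow (a := -(1 / (2 * (f:ℝ)))) (by
        have : (0:ℝ) < 1 / (2 * f) := by positivity
        linarith) (f - 1)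
      have hb2 : 1 - ((f:ℝ) - 1) * (1 / (2 * f)) ≤ (1 - 1 / (2 * (f:ℝ))) ^ (f - 1) := by
        calc 1 - ((f:ℝ) - 1) * (1 / (2 * f)) = 1 + ((f - 1 : ℕ) : ℝ) * (-(1 / (2 * f))) := by
              rw [hfr]; ring
          _ ≤ (1 + -(1 / (2 * (f:ℝ)))) ^ (f - 1) := hb
          _ = (1 - 1 / (2 * (f:ℝ))) ^ (f - 1) := by ring_nf
      have hb3 : (1 - 1 / (2 * (f:ℝ))) ^ (f - 1) ≤ a ^ (f - 1) :=
        pow_le_pow_left₀ hhalf.le hx _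
      have hb4 : 1 - ((f:ℝ) - 1) * (1 / (2 * f)) ≤ a ^ (f - 1) := hb2.trans hb3
      have hq : ((f:ℝ) - 1) * (1 / (2 * f)) * (2 * f) = (f:ℝ) - 1 := by
        field_simp
      nlinarith [hcount, hb4, sq_nonneg ((f:ℝ) - 1)]
  -- finish
  rw [hrw, norm_div, norm_mul, norm_pow, norm_mul, Complex.norm_natCast, norm_pow]
  rw [div_le_iff₀ (by positivity)]
  calc ‖x - ζ‖ ^ 2 * ‖S‖
      ≤ ‖x - ζ‖ ^ 2 * ((f : ℝ) ^ 2 * a ^ (f - 1)) :=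
        mul_le_mul_of_nonneg_left hSfin (by positivity)
    _ = (f : ℝ) * ‖x - ζ‖ ^ 2 * ((f : ℝ) * a ^ (f - 1)) := by ring
end

section
/- Let f ≥ 3, K = ℚ(ζ_f), n = φ(f) ≥ 2, and let A be a d × d unitriangular matrix over K (upper triangular with all diagonal entries equal to 1) such that each entry A_{ij} = ∑_{k=0}^{n−1} a_k ζ_f^k has all its coordinates in the power basis bounded by 1 in absolute value (|a_k| ≤ 1). Embed K^d into ℂ^{nd} via the n complex embeddings of K, and let ‖·‖ denote the operator norm of the induced ℂ-linear maps of A and A⁻¹. Then ‖A‖ ≤ d·n^{3/2} and ‖A⁻¹‖ ≤ 3d·(2n^{3/2})^d. -/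
open Matrix
open scoped Matrix.Norms.L2Operator Classical

noncomputable instance (f : ℕ+) : NumberField (CyclotomicField f ℚ) :=
  haveI : NeZero (f : ℕ) := ⟨f.ne_zero⟩
  haveI : NeZero ((f : ℕ) : ℚ) := ⟨Nat.cast_ne_zero.mpr f.ne_zero⟩
  @IsCyclotomicExtension.numberField {(f : ℕ)} ℚ (CyclotomicField f ℚ) _ _ _ _ _
    (CyclotomicField.isCyclotomicExtension _ _)

/-- The complex matrix describing the `ℂ`-linear action of a matrix `A` over a number field
`K` on `ℂ^{nd}`, where `K^d` is embedded into `ℂ^{nd}` via the `n` complex embeddings of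
`K`. -/
noncomputable def embMatrix {K : Type*} [Field K] {d : ℕ}
    (A : Matrix (Fin d) (Fin d) K) :
    Matrix ((K →+* ℂ) × Fin d) ((K →+* ℂ) × Fin d) ℂ :=
  Matrix.of fun p q => if p.1 = q.1 then p.1 (A p.2 q.2) else 0

lemma opNorm_le_of_frobenius {m n : Type*} [Fintype m] [Fintype n] [DecidableEq n]
    (M : Matrix m n ℂ) {C : ℝ} (hC : 0 ≤ C) (h : ∑ i, ∑ j, ‖M i j‖ ^ 2 ≤ C ^ 2) :
    ‖M‖ ≤ C := by
  rw [Matrix.l2_opNorm_def]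
  refine ContinuousLinearMap.opNorm_le_bound _ hC fun x => ?_
  have hval : (Matrix.toEuclideanLin.trans LinearMap.toContinuousLinearMap M) x
      = (WithLp.equiv 2 (m → ℂ)).symm (M *ᵥ (WithLp.equiv 2 (n → ℂ)) x) := rfl
  rw [hval]
  have hrow : ∀ i, ‖(M *ᵥ (WithLp.equiv 2 (n → ℂ)) x) i‖ ^ 2 ≤ (∑ j, ‖M i j‖ ^ 2) * ‖x‖ ^ 2 := by
    intro i
    set a : EuclideanSpace ℂ n := (WithLp.equiv 2 (n → ℂ)).symm (fun j => (starRingEnd ℂ) (M i j))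
    have hinner : (inner ℂ a x : ℂ) = (M *ᵥ (WithLp.equiv 2 (n → ℂ)) x) i := by
      simp [a, PiLp.inner_apply, Matrix.mulVec, dotProduct, RCLike.inner_apply, mul_comm]
    have hcs := norm_inner_le_norm (𝕜 := ℂ) a x
    rw [hinner] at hcs
    have hna : ‖a‖ ^ 2 = ∑ j, ‖M i j‖ ^ 2 := by
      rw [EuclideanSpace.norm_eq, Real.sq_sqrt (by positivity)]
      simp [a]
    calc ‖(M *ᵥ (WithLp.equiv 2 (n → ℂ)) x) i‖ ^ 2 ≤ (‖a‖ * ‖x‖) ^ 2 := by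
          apply pow_le_pow_left₀ (norm_nonneg _) hcs
      _ = (∑ j, ‖M i j‖ ^ 2) * ‖x‖ ^ 2 := by rw [mul_pow, hna]
  have hsq : ‖(WithLp.equiv 2 (m → ℂ)).symm (M *ᵥ (WithLp.equiv 2 (n → ℂ)) x)‖ ^ 2
      ≤ (C * ‖x‖) ^ 2 := by
    rw [EuclideanSpace.norm_eq, Real.sq_sqrt (by positivity)]
    calc ∑ i, ‖(M *ᵥ (WithLp.equiv 2 (n → ℂ)) x) i‖ ^ 2
        ≤ ∑ i, (∑ j, ‖M i j‖ ^ 2) * ‖x‖ ^ 2 := Finset.sum_le_sum fun i _ => hrow i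
      _ = (∑ i, ∑ j, ‖M i j‖ ^ 2) * ‖x‖ ^ 2 := by rw [Finset.sum_mul]
      _ ≤ C ^ 2 * ‖x‖ ^ 2 := by
          apply mul_le_mul_of_nonneg_right h (by positivity)
      _ = (C * ‖x‖) ^ 2 := by ring
  nlinarith [norm_nonneg ((WithLp.equiv 2 (m → ℂ)).symm (M *ᵥ (WithLp.equiv 2 (n → ℂ)) x)),
    mul_nonneg hC (norm_nonneg x)]

lemma frob_sum_embMatrix_le {K : Type*} [Field K] [Fintype (K →+* ℂ)] {d : ℕ}
    (M : Matrix (Fin d) (Fin d) K) {c : ℝ} (hc0 : 0 ≤ c)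
    (hc : ∀ (σ : K →+* ℂ) (i j : Fin d), ‖σ (M i j)‖ ≤ c) :
    ∑ p : (K →+* ℂ) × Fin d, ∑ q : (K →+* ℂ) × Fin d, ‖embMatrix M p q‖ ^ 2
      ≤ (Fintype.card (K →+* ℂ) : ℝ) * ((d : ℝ) ^ 2 * c ^ 2) := by
  have hentry : ∀ p q : (K →+* ℂ) × Fin d,
      ‖embMatrix M p q‖ ^ 2 = if p.1 = q.1 then ‖p.1 (M p.2 q.2)‖ ^ 2 else 0 := by
    intro p q
    by_cases h : p.1 = q.1 <;> simp [embMatrix, h]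
  calc ∑ p : (K →+* ℂ) × Fin d, ∑ q : (K →+* ℂ) × Fin d, ‖embMatrix M p q‖ ^ 2
      = ∑ σ : K →+* ℂ, ∑ i : Fin d, ∑ τ : K →+* ℂ, ∑ j : Fin d,
          (if σ = τ then ‖σ (M i j)‖ ^ 2 else 0) := by
        rw [Fintype.sum_prod_type]
        refine Finset.sum_congr rfl fun σ _ => Finset.sum_congr rfl fun i _ => ?_
        rw [Fintype.sum_prod_type]
        exact Finset.sum_congr rfl fun τ _ => Finset.sum_congr rfl fun j _ => hentry (σ, i) (τ, j)
    _ = ∑ σ : K →+* ℂ, ∑ i : Fin d, ∑ j : Fin d, ‖σ (M i j)‖ ^ 2 := by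
        refine Finset.sum_congr rfl fun σ _ => Finset.sum_congr rfl fun i _ => ?_
        simp [Finset.sum_ite_eq]
    _ ≤ ∑ σ : K →+* ℂ, ∑ _i : Fin d, ∑ _j : Fin d, c ^ 2 := by
        refine Finset.sum_le_sum fun σ _ => Finset.sum_le_sum fun i _ =>
          Finset.sum_le_sum fun j _ => ?_
        exact pow_le_pow_left₀ (norm_nonneg _) (hc σ i j) 2
    _ = (Fintype.card (K →+* ℂ) : ℝ) * ((d : ℝ) ^ 2 * c ^ 2) := by
        simp only [Finset.sum_const, Finset.card_univ, Fintype.card_fin, nsmul_eq_mul]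
        ring
lemma final_ineq (n s D : ℝ) (d : ℕ) (hn : 1 ≤ n) (hs : s ^ 2 = n) (hs0 : 0 ≤ s)
    (hD : 0 ≤ D) (hd : 1 ≤ d) :
    n * (D ^ 2 * ((1 + n) ^ (d - 1)) ^ 2) ≤ (3 * D * (2 * (n * s)) ^ d) ^ 2 := by
  have hn0 : (0:ℝ) ≤ n := by linarith
  have h1 : ((1 + n) ^ (d - 1)) ^ 2 ≤ ((2 * n) ^ (d - 1)) ^ 2 := by
    gcongr
    · linarith
    all_goals linarith
  have h2 : ((2 * n) ^ (d - 1)) ^ 2 = (4 * n ^ 2) ^ (d - 1) := by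
    rw [← pow_mul, mul_comm (d - 1) 2, pow_mul]
    norm_num
    ring_nf
  have hsq : (2 * (n * s)) ^ 2 = 4 * n ^ 3 := by nlinarith
  have hrhs : (3 * D * (2 * (n * s)) ^ d) ^ 2 = 9 * D ^ 2 * (4 * n ^ 3) ^ d := by
    rw [mul_pow, mul_pow, ← pow_mul, mul_comm d 2, pow_mul, hsq]
    ring
  have hkey : (4 * n ^ 2) ^ (d - 1) * n ≤ (4 * n ^ 3) ^ d := by
    conv_rhs => rw [show d = (d - 1) + 1 from (Nat.succ_pred_eq_of_pos hd).symm]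
    rw [pow_succ]
    have hbase : (4 * n ^ 2) ^ (d - 1) ≤ (4 * n ^ 3) ^ (d - 1) :=
      pow_le_pow_left₀ (by nlinarith) (by nlinarith) _
    have hlast : n ≤ 4 * n ^ 3 := by nlinarith
    have hb0 : (0:ℝ) ≤ (4 * n ^ 2) ^ (d - 1) := by positivity
    exact mul_le_mul hbase hlast hn0 (pow_nonneg (by nlinarith) _)
  calc n * (D ^ 2 * ((1 + n) ^ (d - 1)) ^ 2)
      ≤ n * (D ^ 2 * ((2 * n) ^ (d - 1)) ^ 2) := by
        apply mul_le_mul_of_nonneg_left (mul_le_mul_of_nonneg_left h1 (by positivity)) hn0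
    _ = D ^ 2 * ((4 * n ^ 2) ^ (d - 1) * n) := by rw [h2]; ring
    _ ≤ D ^ 2 * (4 * n ^ 3) ^ d := mul_le_mul_of_nonneg_left hkey (by positivity)
    _ ≤ 9 * D ^ 2 * (4 * n ^ 3) ^ d := by nlinarith [pow_nonneg (by nlinarith : (0:ℝ) ≤ 4 * n^3) d, sq_nonneg D]
    _ = (3 * D * (2 * (n * s)) ^ d) ^ 2 := hrhs.symm
/-- A unitriangular matrix over the cyclotomic field `ℚ(ζ_f)` whose entries have all their
power-basis coordinates bounded by `1` satisfies `‖A‖ ≤ d n^{3/2}` and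
`‖A⁻¹‖ ≤ 3d (2 n^{3/2})^d` for the operator norm induced by the canonical embedding into
`ℂ^{nd}`. -/
theorem unitriangular_bounded_coeffs_conditioning (f : ℕ+) (hf : 3 ≤ (f : ℕ)) (d : ℕ)
    (A : Matrix (Fin d) (Fin d) (CyclotomicField f ℚ))
    (ζ : CyclotomicField f ℚ) (hζ : IsPrimitiveRoot ζ f)
    (hA : A.BlockTriangular id) (hdiag : ∀ i, A i i = 1)
    (coeffs : Fin d → Fin d → Fin (Nat.totient (f : ℕ)) → ℚ)
    (hcoeffs : ∀ i j, A i j = ∑ k : Fin (Nat.totient (f : ℕ)),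
      (coeffs i j k : CyclotomicField f ℚ) * ζ ^ (k : ℕ))
    (hbound : ∀ i j k, |coeffs i j k| ≤ 1) :
    ‖embMatrix A‖ ≤ (d : ℝ) * (Nat.totient (f : ℕ) : ℝ) ^ ((3 : ℝ) / 2) ∧
    ‖embMatrix A⁻¹‖ ≤ 3 * (d : ℝ) *
      (2 * (Nat.totient (f : ℕ) : ℝ) ^ ((3 : ℝ) / 2)) ^ d := by
  have hNpos : 0 < Nat.totient (f : ℕ) := Nat.totient_pos.2 f.pos
  have hN1 : (1 : ℝ) ≤ (Nat.totient (f : ℕ) : ℝ) := by exact_mod_cast hNpos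
  have hcard : Fintype.card (CyclotomicField f ℚ →+* ℂ) = Nat.totient (f : ℕ) := by
    haveI : NeZero (f : ℕ) := ⟨f.ne_zero⟩
    haveI : NeZero ((f : ℕ) : ℚ) := ⟨Nat.cast_ne_zero.mpr f.ne_zero⟩
    have hcyc := CyclotomicField.isCyclotomicExtension (f : ℕ) ℚ
    rw [NumberField.Embeddings.card (CyclotomicField f ℚ) ℂ]
    have hfr := @IsCyclotomicExtension.finrank (f : ℕ) _ ℚ (CyclotomicField f ℚ) _ _ _ _ hcyc
      (Polynomial.cyclotomic.irreducible_rat f.pos)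
    convert hfr
  have hAentry : ∀ (σ : CyclotomicField f ℚ →+* ℂ) (i j : Fin d),
      ‖σ (A i j)‖ ≤ (Nat.totient (f : ℕ) : ℝ) := by
    intro σ i j
    have hzeta : ‖σ ζ‖ = 1 := by
      refine Complex.norm_eq_one_of_pow_eq_one (n := (f : ℕ)) ?_ f.ne_zero
      rw [← map_pow, hζ.pow_eq_one, _root_.map_one]
    rw [hcoeffs i j, map_sum]
    calc ‖∑ k : Fin (Nat.totient (f : ℕ)),
          σ ((coeffs i j k : CyclotomicField f ℚ) * ζ ^ (k : ℕ))‖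
        ≤ ∑ k : Fin (Nat.totient (f : ℕ)),
          ‖σ ((coeffs i j k : CyclotomicField f ℚ) * ζ ^ (k : ℕ))‖ := norm_sum_le _ _
      _ ≤ ∑ _k : Fin (Nat.totient (f : ℕ)), (1 : ℝ) := by
          refine Finset.sum_le_sum fun k _ => ?_
          rw [_root_.map_mul, _root_.map_pow, norm_mul, norm_pow, hzeta, one_pow, mul_one,
            map_ratCast]
          rw [show ((coeffs i j k : ℚ) : ℂ) = (((coeffs i j k : ℚ) : ℝ) : ℂ) by push_cast; ring]
          rw [Complex.norm_real, Real.norm_eq_abs]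
          exact_mod_cast hbound i j k
      _ = (Nat.totient (f : ℕ) : ℝ) := by simp
  have hs3 : (Nat.totient (f : ℕ) : ℝ) ^ ((3 : ℝ) / 2)
      = (Nat.totient (f : ℕ) : ℝ) * Real.sqrt (Nat.totient (f : ℕ) : ℝ) := by
    rw [show (3 : ℝ) / 2 = 1 + 1 / 2 by norm_num,
      Real.rpow_add (by positivity), Real.rpow_one, ← Real.sqrt_eq_rpow]
  have hssq : Real.sqrt (Nat.totient (f : ℕ) : ℝ) ^ 2 = (Nat.totient (f : ℕ) : ℝ) :=
    Real.sq_sqrt (by positivity)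
  have hs1 : (1 : ℝ) ≤ Real.sqrt (Nat.totient (f : ℕ) : ℝ) := by
    nlinarith [Real.sqrt_nonneg (Nat.totient (f : ℕ) : ℝ)]
  constructor
  · refine opNorm_le_of_frobenius _ (by positivity) ?_
    refine le_trans (frob_sum_embMatrix_le A (by positivity) hAentry) ?_
    rw [hcard, hs3]
    nlinarith [hssq, hs1, hN1, sq_nonneg ((d : ℝ)), Nat.cast_nonneg (α := ℝ) d]
  · have hdet : A.det = 1 := by
      rw [Matrix.det_of_upperTriangular hA]
      simp [hdiag]
    have hu : IsUnit A.det := by rw [hdet]; exact isUnit_one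
    have hAB : A * A⁻¹ = 1 := Matrix.mul_nonsing_inv A hu
    haveI : Invertible A := A.invertibleOfIsUnitDet hu
    have hBtri : (A⁻¹).BlockTriangular id := Matrix.blockTriangular_inv_of_blockTriangular hA
    have hrec : ∀ i j : Fin d, A⁻¹ i j
        = (if i = j then 1 else 0) - ∑ l ∈ Finset.Ioc i j, A i l * A⁻¹ l j := by
      intro i j
      have h1 : ∑ l, A i l * A⁻¹ l j
          = (1 : Matrix (Fin d) (Fin d) (CyclotomicField f ℚ)) i j := by
        rw [← Matrix.mul_apply, hAB]
      have h2 : ∑ l ∈ Finset.Icc i j, A i l * A⁻¹ l j = ∑ l, A i l * A⁻¹ l j := by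
        apply Finset.sum_subset (Finset.subset_univ _)
        intro x _ hx
        rw [Finset.mem_Icc, not_and_or] at hx
        rcases hx with hx | hx
        · rw [hA (show (id x : Fin d) < id i from not_le.mp hx), zero_mul]
        · rw [hBtri (show (id j : Fin d) < id x from not_le.mp hx), mul_zero]
      rw [h1, Matrix.one_apply] at h2
      by_cases hij : i ≤ j
      · rw [Finset.Icc_eq_cons_Ioc hij, Finset.sum_cons, hdiag i, one_mul] at h2
        exact eq_sub_of_add_eq h2
      · rw [hBtri (show (id j : Fin d) < id i from not_le.mp hij)]
        rw [Finset.Ioc_eq_empty (fun h => hij (le_of_lt h)), Finset.sum_empty,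
          if_neg (fun h => hij (le_of_eq h)), sub_zero]
    have hBdiag : ∀ j : Fin d, A⁻¹ j j = 1 := by
      intro j
      rw [hrec j j, if_pos rfl, Finset.Ioc_self, Finset.sum_empty, sub_zero]
    have key : ∀ (σ : CyclotomicField f ℚ →+* ℂ) (t : ℕ) (i j : Fin d), i ≤ j →
        (j : ℕ) - (i : ℕ) ≤ t →
        ∑ l ∈ Finset.Icc i j, ‖σ (A⁻¹ l j)‖
          ≤ (1 + (Nat.totient (f : ℕ) : ℝ)) ^ t := by
      intro σ t
      induction t with
      | zero =>
        intro i j hij h0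
        have hij' : i = j := le_antisymm hij (by rw [Fin.le_def]; omega)
        subst hij'
        rw [Finset.Icc_self, Finset.sum_singleton, hBdiag, _root_.map_one, norm_one, pow_zero]
      | succ t ih =>
        intro i j hij ht
        by_cases heq : i = j
        · subst heq
          rw [Finset.Icc_self, Finset.sum_singleton, hBdiag, _root_.map_one, norm_one]
          exact one_le_pow₀ (by linarith)
        · have hlt : i < j := lt_of_le_of_ne hij heq
          have hltn : (i : ℕ) < (j : ℕ) := hlt
          have hi1 : (i : ℕ) + 1 < d := by have := j.isLt; omega
          have hIoc : Finset.Ioc i j = Finset.Icc (⟨(i : ℕ) + 1, hi1⟩ : Fin d) j := by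
            ext l
            simp only [Finset.mem_Ioc, Finset.mem_Icc, Fin.lt_def, Fin.le_def]
            omega
          have hi'j : (⟨(i : ℕ) + 1, hi1⟩ : Fin d) ≤ j := by rw [Fin.le_def]; simpa using hltn
          have hsub := ih ⟨(i : ℕ) + 1, hi1⟩ j hi'j (by simp only [Fin.le_def]; omega)
          have hS0 : 0 ≤ ∑ l ∈ Finset.Icc (⟨(i : ℕ) + 1, hi1⟩ : Fin d) j, ‖σ (A⁻¹ l j)‖ :=
            Finset.sum_nonneg fun l _ => norm_nonneg _
          have hBij : ‖σ (A⁻¹ i j)‖ ≤ (Nat.totient (f : ℕ) : ℝ)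
              * ∑ l ∈ Finset.Icc (⟨(i : ℕ) + 1, hi1⟩ : Fin d) j, ‖σ (A⁻¹ l j)‖ := by
            rw [hrec i j, if_neg heq, zero_sub, map_neg, norm_neg, map_sum, ← hIoc]
            calc ‖∑ l ∈ Finset.Ioc i j, σ (A i l * A⁻¹ l j)‖
                ≤ ∑ l ∈ Finset.Ioc i j, ‖σ (A i l * A⁻¹ l j)‖ := norm_sum_le _ _
              _ ≤ ∑ l ∈ Finset.Ioc i j, (Nat.totient (f : ℕ) : ℝ) * ‖σ (A⁻¹ l j)‖ := by
                  refine Finset.sum_le_sum fun l _ => ?_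
                  rw [_root_.map_mul, norm_mul]
                  exact mul_le_mul_of_nonneg_right (hAentry σ i l) (norm_nonneg _)
              _ = (Nat.totient (f : ℕ) : ℝ)
                  * ∑ l ∈ Finset.Ioc i j, ‖σ (A⁻¹ l j)‖ := by rw [Finset.mul_sum]
              _ = _ := by rw [hIoc]
          rw [Finset.Icc_eq_cons_Ioc hij, Finset.sum_cons, hIoc]
          calc ‖σ (A⁻¹ i j)‖
                + ∑ l ∈ Finset.Icc (⟨(i : ℕ) + 1, hi1⟩ : Fin d) j, ‖σ (A⁻¹ l j)‖
              ≤ (1 + (Nat.totient (f : ℕ) : ℝ))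
                * ∑ l ∈ Finset.Icc (⟨(i : ℕ) + 1, hi1⟩ : Fin d) j, ‖σ (A⁻¹ l j)‖ := by
                nlinarith
            _ ≤ (1 + (Nat.totient (f : ℕ) : ℝ)) * (1 + (Nat.totient (f : ℕ) : ℝ)) ^ t :=
                mul_le_mul_of_nonneg_left hsub (by linarith)
            _ = (1 + (Nat.totient (f : ℕ) : ℝ)) ^ (t + 1) := by ring
    have hBentry : ∀ (σ : CyclotomicField f ℚ →+* ℂ) (i j : Fin d),
        ‖σ (A⁻¹ i j)‖ ≤ (1 + (Nat.totient (f : ℕ) : ℝ)) ^ (d - 1) := by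
      intro σ i j
      by_cases hij : i ≤ j
      · have hk := key σ (d - 1) i j hij (by have := j.isLt; omega)
        refine le_trans (Finset.single_le_sum (f := fun l => ‖σ (A⁻¹ l j)‖)
          (fun l _ => norm_nonneg _) (Finset.mem_Icc.mpr ⟨le_refl i, hij⟩)) hk
      · rw [hBtri (show (id j : Fin d) < id i from not_le.mp hij), map_zero, norm_zero]
        positivity
    refine opNorm_le_of_frobenius _ (by positivity) ?_
    refine le_trans (frob_sum_embMatrix_le _ (by positivity) hBentry) ?_
    rw [hcard, hs3]
    rcases Nat.eq_zero_or_pos d with hd | hd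
    · subst hd; norm_num
    · exact final_ineq _ _ _ d hN1 hssq (Real.sqrt_nonneg _) (Nat.cast_nonneg d) hd
end

section
/- Let f ≥ 3 be an integer. Then: (i) for every integer α with 1 ≤ α ≤ f−1 and gcd(α, f) = 1, one has |ln|1 − e^{2πiα/f}|| ≤ ln f; (ii) ∑_{α ∈ (ℤ/fℤ)^×} (ln|1 − e^{2πiα/f}|)² ≤ 4f, where the sum is over all residues 1 ≤ α ≤ f−1 coprime to f. -/
open Real

-- abs formula
lemma zlem_abs (f α : ℕ) (hf : 0 < f) (hα : α ≤ f) :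
    norm (1 - Complex.exp (2 * (Real.pi : ℂ) * Complex.I * (α : ℂ) / (f : ℂ))) =
      2 * Real.sin (Real.pi * α / f) := by
  have hf0 : (f : ℂ) ≠ 0 := Nat.cast_ne_zero.mpr hf.ne'
  set ψ : ℝ := Real.pi * α / f with hψ
  have h1 : 2 * (Real.pi : ℂ) * Complex.I * (α : ℂ) / (f : ℂ) = ((2 * ψ : ℝ) : ℂ) * Complex.I := by
    rw [hψ]; push_cast; field_simp
  have h2 : (1 : ℂ) - Complex.exp (((2 * ψ : ℝ) : ℂ) * Complex.I)
      = ((1 - Real.cos (2*ψ) : ℝ) : ℂ) + ((-Real.sin (2*ψ) : ℝ) : ℂ) * Complex.I := by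
    rw [Complex.exp_mul_I]; push_cast; ring
  rw [h1, h2, Complex.norm_add_mul_I]
  have hsq : (1 - Real.cos (2*ψ)) ^ 2 + (-Real.sin (2*ψ)) ^ 2 = (2 * Real.sin ψ) ^ 2 := by
    have h3 := Real.sin_sq_add_cos_sq (2*ψ)
    have h4 := Real.cos_two_mul' ψ
    have h5 := Real.sin_sq_add_cos_sq ψ
    nlinarith
  rw [hsq, Real.sqrt_sq]
  have hs : 0 ≤ Real.sin ψ := by
    apply Real.sin_nonneg_of_nonneg_of_le_pi
    · positivity
    · rw [hψ, div_le_iff₀ (by positivity)]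
      nlinarith [Real.pi_pos, (Nat.cast_le (α := ℝ)).mpr hα]
  linarith

-- Jordan bound: 2 sin(π α / f) ≥ 4 min(α, f-α)/f, and ≤ 2
lemma zlem_sin_lb (f α : ℕ) (hf : 0 < f) (h1 : 1 ≤ α) (h2 : α < f) :
    4 * ((min α (f - α) : ℕ) : ℝ) / f ≤ 2 * Real.sin (Real.pi * α / f) := by
  have hfR : (0:ℝ) < f := by positivity
  have hπ := Real.pi_pos
  have hαf : (α:ℝ) ≤ f := by exact_mod_cast h2.le
  rcases le_or_gt (2*α) f with hc | hc
  · have hmin : (min α (f-α) : ℕ) = α := by omega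
    rw [hmin]
    have hb : Real.pi * α / f ≤ Real.pi / 2 := by
      rw [div_le_div_iff₀ hfR two_pos]
      have : (2:ℝ) * α ≤ f := by exact_mod_cast hc
      nlinarith
    have h' : 2 / Real.pi * (Real.pi * α / f) ≤ Real.sin (Real.pi * α / f) :=
      Real.mul_le_sin (by positivity) hb
    rw [div_le_iff₀ hfR]
    have he : 2 / Real.pi * (Real.pi * α / f) * f = 2 * (α:ℝ) := by field_simp
    nlinarith
  · have hmin : (min α (f-α) : ℕ) = f - α := by omega
    rw [hmin]
    have hcast : ((f - α : ℕ) : ℝ) = (f:ℝ) - α := by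
      have : α ≤ f := h2.le; push_cast [this]; ring
    rw [hcast]
    have hsin : Real.sin (Real.pi * α / f) = Real.sin (Real.pi * ((f:ℝ)-α) / f) := by
      rw [← Real.sin_pi_sub]; congr 1; field_simp
    rw [hsin]
    have hb : Real.pi * ((f:ℝ)-α) / f ≤ Real.pi / 2 := by
      rw [div_le_div_iff₀ hfR two_pos]
      have : (f:ℝ) < 2 * α := by exact_mod_cast hc
      nlinarith
    have hnn : (0:ℝ) ≤ (f:ℝ) - α := by linarith
    have h' : 2 / Real.pi * (Real.pi * ((f:ℝ)-α) / f) ≤ Real.sin (Real.pi * ((f:ℝ)-α) / f) :=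
      Real.mul_le_sin (by positivity) hb
    rw [div_le_iff₀ hfR]
    have : 2 / Real.pi * (Real.pi * ((f:ℝ)-α) / f) * f = 2 * ((f:ℝ)-α) := by field_simp
    nlinarith [Real.sin_nonneg_of_nonneg_of_le_pi (x := Real.pi * ((f:ℝ)-α) / f) (by positivity)
      (by rw [div_le_iff₀ hfR]; nlinarith)]

lemma zlem_integrable (L : ℝ) {a b : ℝ} (ha : 0 < a) (hb : 0 < b) :
    IntervalIntegrable (fun x => (L - Real.log x)^2) MeasureTheory.volume a b := by
  apply ContinuousOn.intervalIntegrable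
  apply ContinuousOn.pow
  apply ContinuousOn.sub continuousOn_const
  apply Real.continuousOn_log.mono
  intro x hx
  simp only [Set.mem_compl_iff, Set.mem_singleton_iff]
  rcases le_total a b with h | h
  · rw [Set.uIcc_of_le h] at hx; exact (lt_of_lt_of_le ha hx.1).ne'
  · rw [Set.uIcc_of_ge h] at hx; exact (lt_of_lt_of_le hb hx.1).ne'

lemma zlem_ftc (L : ℝ) (c : ℝ) (hc : 1 ≤ c) :
    ∫ x in (1:ℝ)..c, (L - Real.log x)^2 =
      c * ((L - Real.log c)^2 + 2*(L - Real.log c) + 2) - (L^2 + 2*L + 2) := by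
  have key : ∀ x ∈ Set.uIcc (1:ℝ) c,
      HasDerivAt (fun y => y * ((L - Real.log y)^2 + 2*(L - Real.log y) + 2))
        ((L - Real.log x)^2) x := by
    intro x hx
    rw [Set.uIcc_of_le hc] at hx
    have hx0 : (0:ℝ) < x := lt_of_lt_of_le one_pos hx.1
    have hlog : HasDerivAt Real.log x⁻¹ x := Real.hasDerivAt_log hx0.ne'
    have hu : HasDerivAt (fun y => L - Real.log y) (-x⁻¹) x := hlog.const_sub L
    have hinner : HasDerivAt (fun y => (L - Real.log y)^2 + 2*(L - Real.log y) + 2)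
        ((2:ℕ) * (L - Real.log x)^(2-1) * (-x⁻¹) + 2 * (-x⁻¹)) x :=
      ((hu.pow 2).add ((hu.const_mul 2))).add_const 2
    have := (hasDerivAt_id x).mul hinner
    refine this.congr_deriv ?_
    have hxne : x ≠ 0 := hx0.ne'
    have hxx : id x * x⁻¹ = 1 := mul_inv_cancel₀ hxne
    linear_combination (-(2 * (L - Real.log x) + 2)) * hxx
  rw [intervalIntegral.integral_eq_sub_of_hasDerivAt key (zlem_integrable L one_pos (by linarith))]
  simp only [Real.log_one]
  ring

/-- Bounds on the logarithmic embedding of `ζ_f − 1`: each coordinate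
`ln|1 − e^{2πiα/f}|` is at most `ln f` in absolute value, and the sum of their squares over
`(ℤ/fℤ)^×` is at most `4f`. -/
theorem log_embedding_of_zeta_sub_one_bounds (f : ℕ) (hf : 3 ≤ f) :
    (∀ α : ℕ, 1 ≤ α → α ≤ f - 1 → Nat.gcd α f = 1 →
      |Real.log (norm
        (1 - Complex.exp (2 * (Real.pi : ℂ) * Complex.I * (α : ℂ) / (f : ℂ))))| ≤
        Real.log f) ∧
    (∑ α ∈ (Finset.range f).filter (fun α => Nat.gcd α f = 1),
      Real.log (norm
        (1 - Complex.exp (2 * (Real.pi : ℂ) * Complex.I * (α : ℂ) / (f : ℂ)))) ^ 2 ≤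
        4 * (f : ℝ)) := by
  have hf0 : 0 < f := by omega
  have hfR : (0:ℝ) < f := by positivity
  have hfR1 : (1:ℝ) ≤ f := by exact_mod_cast hf0
  have hfR3 : (3:ℝ) ≤ f := by exact_mod_cast hf
  set A : ℕ → ℝ := fun α => norm
      (1 - Complex.exp (2 * (Real.pi : ℂ) * Complex.I * (α : ℂ) / (f : ℂ))) with hA
  -- key bounds on A
  have key : ∀ α : ℕ, 1 ≤ α → α < f →
      4 * ((min α (f - α) : ℕ) : ℝ) / f ≤ A α ∧ A α ≤ 2 := by
    intro α h1 h2
    have habs : A α = 2 * Real.sin (Real.pi * α / f) := zlem_abs f α hf0 h2.le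
    constructor
    · rw [habs]; exact zlem_sin_lb f α hf0 h1 h2
    · rw [habs]; nlinarith [Real.sin_le_one (Real.pi * α / f)]
  have hmin1 : ∀ α : ℕ, 1 ≤ α → α < f → 1 ≤ min α (f - α) ∧ 2 * min α (f - α) ≤ f := by
    intro α h1 h2; omega
  constructor
  · intro α h1 h2 _
    have h2' : α < f := by omega
    obtain ⟨hlo, hhi⟩ := key α h1 h2'
    obtain ⟨hm1, _⟩ := hmin1 α h1 h2'
    have hmR : (1:ℝ) ≤ ((min α (f - α) : ℕ) : ℝ) := by exact_mod_cast hm1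
    have hApos : 0 < A α := lt_of_lt_of_le (by positivity) hlo
    rw [abs_le]
    constructor
    · have hinv : (f:ℝ)⁻¹ ≤ A α := by
        refine le_trans ?_ hlo
        rw [inv_le_iff_one_le_mul₀ hfR] at *
        rw [div_mul_eq_mul_div, le_div_iff₀ hfR]
        nlinarith
      calc -Real.log f = Real.log (f:ℝ)⁻¹ := by rw [Real.log_inv]
        _ ≤ Real.log (A α) := Real.log_le_log (by positivity) hinv
    · calc Real.log (A α) ≤ Real.log 2 := Real.log_le_log hApos hhi
        _ ≤ Real.log f := Real.log_le_log (by norm_num) (by linarith)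
  · set L := Real.log f with hL
    set G : ℕ → ℝ := fun m => (L - Real.log m)^2 with hG
    -- termwise bound
    have term : ∀ α ∈ Finset.Ico 1 f, Real.log (A α) ^ 2 ≤ G α + G (f - α) := by
      intro α hα
      rw [Finset.mem_Ico] at hα
      obtain ⟨h1, h2⟩ := hα
      obtain ⟨hlo, hhi⟩ := key α h1 h2
      obtain ⟨hm1, hm2⟩ := hmin1 α h1 h2
      set m := min α (f - α) with hm
      have hmR : (1:ℝ) ≤ (m:ℝ) := by exact_mod_cast hm1
      have hmRpos : (0:ℝ) < m := by linarith
      have hm2R : 2 * (m:ℝ) ≤ f := by exact_mod_cast hm2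
      have hApos : 0 < A α := lt_of_lt_of_le (by positivity) hlo
      have hmain : Real.log (A α) ^ 2 ≤ (L - Real.log m)^2 := by
        apply sq_le_sq'
        · -- lower bound
          have h4 : Real.log (4 * (m:ℝ) / f) ≤ Real.log (A α) :=
            Real.log_le_log (by positivity) hlo
          have he : Real.log (4 * (m:ℝ) / f) = Real.log 4 + Real.log m - L := by
            rw [Real.log_div (by positivity) hfR.ne', Real.log_mul (by norm_num) hmRpos.ne', hL]
          have h40 : 0 ≤ Real.log 4 := Real.log_nonneg (by norm_num)
          linarith
        · -- upper bound
          have h2l : Real.log (A α) ≤ Real.log 2 := Real.log_le_log hApos hhi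
          have h2m : Real.log 2 + Real.log m ≤ L := by
            rw [hL, ← Real.log_mul (by norm_num) hmRpos.ne']
            exact Real.log_le_log (by positivity) hm2R
          linarith
      refine hmain.trans ?_
      rcases min_cases α (f - α) with ⟨hc, _⟩ | ⟨hc, _⟩ <;> rw [hm, hc] <;>
        · simp only [hG]; nlinarith [sq_nonneg (L - Real.log ((α:ℕ):ℝ)),
            sq_nonneg (L - Real.log (((f - α :ℕ)):ℝ))]
    -- sum over the filter ≤ sum over Ico 1 f
    have hsub : (Finset.range f).filter (fun α => Nat.gcd α f = 1) ⊆ Finset.Ico 1 f := by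
      intro α hα
      simp only [Finset.mem_filter, Finset.mem_range] at hα
      rw [Finset.mem_Ico]
      rcases Nat.eq_zero_or_pos α with h | h
      · exfalso; rw [h] at hα; simp [Nat.gcd_zero_left] at hα; omega
      · exact ⟨h, hα.1⟩
    have step1 : ∑ α ∈ (Finset.range f).filter (fun α => Nat.gcd α f = 1),
        Real.log (A α) ^ 2 ≤ ∑ α ∈ Finset.Ico 1 f, Real.log (A α) ^ 2 :=
      Finset.sum_le_sum_of_subset_of_nonneg hsub (fun i _ _ => sq_nonneg _)
    have step2 : ∑ α ∈ Finset.Ico 1 f, Real.log (A α) ^ 2 ≤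
        ∑ α ∈ Finset.Ico 1 f, (G α + G (f - α)) := Finset.sum_le_sum term
    have step3 : ∑ α ∈ Finset.Ico 1 f, (G α + G (f - α)) = 2 * ∑ α ∈ Finset.Ico 1 f, G α := by
      rw [Finset.sum_add_distrib, Finset.sum_Ico_reflect G 1 (by omega : f ≤ f + 1)]
      have e1 : f + 1 - f = 1 := by omega
      have e2 : f + 1 - 1 = f := by omega
      rw [e1, e2]; ring
    -- compare with the integral
    have step4 : ∑ α ∈ Finset.Ico 1 f, G α = G 1 + ∑ α ∈ Finset.Ico 2 f, G α := by
      rw [Finset.sum_eq_sum_Ico_succ_bot (by omega : 1 < f)]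
    have hanti : AntitoneOn (fun x : ℝ => (L - Real.log x)^2)
        (Set.Icc ((1:ℕ):ℝ) (((f-1:ℕ)):ℝ)) := by
      intro x hx y hy hxy
      simp only [Set.mem_Icc] at hx hy
      have hx0 : (0:ℝ) < x := lt_of_lt_of_le one_pos (by exact_mod_cast hx.1)
      have hy0 : (0:ℝ) < y := lt_of_lt_of_le hx0 hxy
      have hyf : y ≤ (f:ℝ) := le_trans hy.2 (by
        have : ((f-1:ℕ):ℝ) ≤ (f:ℝ) := by exact_mod_cast Nat.sub_le f 1
        exact this)
      have hl1 : Real.log x ≤ Real.log y := Real.log_le_log hx0 hxy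
      have hl2 : Real.log y ≤ L := hL ▸ Real.log_le_log hy0 hyf
      simp only
      apply pow_le_pow_left₀ (by linarith) (by linarith)
    have step5 : ∑ α ∈ Finset.Ico 2 f, G α ≤
        ∫ x in ((1:ℕ):ℝ)..(((f-1:ℕ)):ℝ), (L - Real.log x)^2 := by
      have := AntitoneOn.sum_le_integral_Ico (f := fun x : ℝ => (L - Real.log x)^2)
        (a := 1) (b := f - 1) (by omega) hanti
      refine le_trans (le_of_eq ?_) this
      rw [Finset.sum_Ico_eq_sum_range, Finset.sum_Ico_eq_sum_range]
      have e3 : f - 2 = f - 1 - 1 := by omega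
      rw [e3]
      apply Finset.sum_congr rfl
      intro i _
      simp only [hG]
      congr 2
      push_cast
      ring
    have hcast1 : ((1:ℕ):ℝ) = (1:ℝ) := by norm_num
    have hcastf : (((f-1:ℕ)):ℝ) = (f:ℝ) - 1 := by
      have : 1 ≤ f := by omega
      push_cast [this]; ring
    have step6 : (∫ x in ((1:ℕ):ℝ)..(((f-1:ℕ)):ℝ), (L - Real.log x)^2) ≤
        ∫ x in (1:ℝ)..(f:ℝ), (L - Real.log x)^2 := by
      rw [hcast1, hcastf]
      have hi1 : IntervalIntegrable (fun x => (L - Real.log x)^2) MeasureTheory.volume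
          1 ((f:ℝ)-1) := zlem_integrable L one_pos (by linarith)
      have hi2 : IntervalIntegrable (fun x => (L - Real.log x)^2) MeasureTheory.volume
          ((f:ℝ)-1) f := zlem_integrable L (by linarith) hfR
      rw [← intervalIntegral.integral_add_adjacent_intervals hi1 hi2]
      have : 0 ≤ ∫ x in ((f:ℝ)-1)..(f:ℝ), (L - Real.log x)^2 :=
        intervalIntegral.integral_nonneg (by linarith) (fun u _ => sq_nonneg _)
      linarith
    have step7 : (∫ x in (1:ℝ)..(f:ℝ), (L - Real.log x)^2) = 2*(f:ℝ) - L^2 - 2*L - 2 := by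
      rw [zlem_ftc L f hfR1, hL]
      simp
      ring
    have hG1 : G 1 = L^2 := by simp [hG]
    have hL0 : 0 ≤ L := Real.log_nonneg hfR1
    calc ∑ α ∈ (Finset.range f).filter (fun α => Nat.gcd α f = 1), Real.log (A α) ^ 2
        ≤ 2 * ∑ α ∈ Finset.Ico 1 f, G α := by
          rw [← step3]; exact le_trans step1 step2
      _ ≤ 2 * (L^2 + (2*(f:ℝ) - L^2 - 2*L - 2)) := by
          rw [step4, hG1]
          have := le_trans step5 (step6.trans_eq step7)
          linarith
      _ ≤ 4 * (f:ℝ) := by linarith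
end

section
/- Let f ≥ 3 be an integer and K = ℚ(ζ_f) the f-th cyclotomic field with Galois group Gal(K/ℚ). Then the subgroup of K^× generated by −1, ζ_f, and all elements 1 − ζ_f^b for integers b with f ∤ b, is equal to the subgroup of K^× generated by −1, ζ_f, and all elements σ(1 − ζ_f^a) where σ ranges over Gal(K/ℚ) and a ranges over the unitary divisors of f other than f itself (i.e. a | f, gcd(a, f/a) = 1, a ≠ f). Consequently, the group of cyclotomic units (the units of O_K lying in the first subgroup) equals the group of units of O_K lying in the second subgroup. -/
open Polynomial

private lemma pow_eq_pow_of_modEq_aux {K : Type*} [Monoid K] {ζ : K} {n : ℕ} (h1 : ζ ^ n = 1)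
    {i j : ℕ} (h : i ≡ j [MOD n]) : ζ ^ i = ζ ^ j := by
  wlog hle : j ≤ i generalizing i j
  · exact (this h.symm (le_of_not_ge hle)).symm
  obtain ⟨t, ht⟩ := (Nat.modEq_iff_dvd' hle).mp h.symm
  have hi : i = j + n * t := by omega
  rw [hi, pow_add, pow_mul, h1, one_pow, mul_one]

private lemma exists_coprime_lift {m n : ℕ} (hm : m ∣ n) (hm1 : 0 < m) (hn : n ≠ 0) {c : ℕ}
    (hc : Nat.Coprime c m) : ∃ c', Nat.Coprime c' n ∧ c' ≡ c [MOD m] := by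
  haveI : NeZero n := ⟨hn⟩
  haveI : NeZero m := ⟨hm1.ne'⟩
  obtain ⟨v, hv⟩ := ZMod.unitsMap_surjective hm (ZMod.unitOfCoprime c hc)
  refine ⟨(v : ZMod n).val, ZMod.val_coe_unit_coprime v, ?_⟩
  have h2 := congrArg (Units.val) hv
  rw [ZMod.unitsMap_def] at h2
  simp only [Units.coe_map, ZMod.coe_unitOfCoprime, MonoidHom.coe_coe] at h2
  have h3 : (((v : ZMod n).val : ℕ) : ZMod m) = (c : ZMod m) := by
    rw [ZMod.natCast_val]
    rwa [ZMod.castHom_apply] at h2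
  exact (ZMod.natCast_eq_natCast_iff _ _ _).mp h3

private lemma decomp {K : Type*} [CommRing K] [IsDomain K] {ζ η : K} {n m : ℕ} (hn : 0 < n)
    (hζ : IsPrimitiveRoot ζ n) (hm : m ∣ n) (hm1 : 1 < m) (hη : IsPrimitiveRoot η m) :
    ∃ k, η = ζ ^ k ∧ Nat.gcd n k = n / m := by
  haveI : NeZero n := ⟨hn.ne'⟩
  have hηn : η ^ n = 1 := by
    obtain ⟨d, rfl⟩ := hm
    rw [pow_mul, hη.pow_eq_one, one_pow]
  obtain ⟨k, hk_lt, hk⟩ := hζ.eq_pow_of_pow_eq_one hηn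
  refine ⟨k, hk.symm, ?_⟩
  have hk0 : k ≠ 0 := by
    rintro rfl
    rw [pow_zero] at hk
    exact hη.ne_one hm1 hk.symm
  have h1 : orderOf η = n / Nat.gcd n k := by
    rw [← hk, orderOf_pow' _ hk0, ← hζ.eq_orderOf]
  have h2 : m = n / Nat.gcd n k := hη.eq_orderOf.trans h1
  rw [h2, Nat.div_div_self (Nat.gcd_dvd_left n k) hn.ne']


/-- The set of units of `K` whose value is `−1`, `ζ_f`, or `1 − ζ_f^b` for some integer `b`
not divisible by `f`. -/
def cycGenSet1 (f : ℕ+) {K : Type*} [Field K] (ζ : K) : Set Kˣ :=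
  {u : Kˣ | (u : K) = -1 ∨ (u : K) = ζ ∨
    ∃ b : ℤ, ¬ ((f : ℤ) ∣ b) ∧ (u : K) = 1 - ζ ^ b}

/-- The set of units of `K` whose value is `−1`, `ζ_f`, or `σ(1 − ζ_f^a)` for a Galois
automorphism `σ` and a unitary divisor `a ≠ f` of `f`. -/
def cycGenSet2 (f : ℕ+) {K : Type*} [Field K] [Algebra ℚ K] (ζ : K) : Set Kˣ :=
  {u : Kˣ | (u : K) = -1 ∨ (u : K) = ζ ∨
    ∃ (σ : K ≃ₐ[ℚ] K) (a : ℕ), a ∣ (f : ℕ) ∧ Nat.gcd a ((f : ℕ) / a) = 1 ∧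
      a ≠ (f : ℕ) ∧ (u : K) = σ (1 - ζ ^ a)}


private lemma key_lemma (f : ℕ+) {K : Type*} [Field K] [Algebra ℚ K]
    [IsCyclotomicExtension {(f : ℕ)} ℚ K] {ζ : K} (hζ : IsPrimitiveRoot ζ f) :
    ∀ t m : ℕ, (f : ℕ) / m ≤ t → m ∣ (f : ℕ) → 1 < m → ∀ η : K, IsPrimitiveRoot η m →
      ∀ u : Kˣ, (u : K) = 1 - η → u ∈ Subgroup.closure (cycGenSet2 f ζ) := by
  have hn : 0 < (f : ℕ) := f.pos
  intro t
  induction t with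
  | zero =>
    intro m hmt hm hm1 η hη u hu
    have : 0 < (f : ℕ) / m := Nat.div_pos (Nat.le_of_dvd hn hm) (by omega)
    omega
  | succ t ih =>
    intro m hmt hm hm1 η hη u hu
    obtain ⟨k, hηk, hgcd⟩ := decomp hn hζ hm hm1 hη
    have hmn : m * ((f : ℕ) / m) = (f : ℕ) := Nat.mul_div_cancel' hm
    by_cases hunit : Nat.gcd m ((f : ℕ) / m) = 1
    · -- base case: m is a unitary divisor; 1 - η is a Galois conjugate of 1 - ζ^a
      set a := (f : ℕ) / m with ha_def
      have ha : a ∣ (f : ℕ) := Nat.div_dvd_of_dvd hm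
      have ha0 : 0 < a := Nat.div_pos (Nat.le_of_dvd hn hm) (by omega)
      have hak : a ∣ k := hgcd ▸ Nat.gcd_dvd_right (f : ℕ) k
      obtain ⟨c, hkc⟩ := hak
      have hc : Nat.Coprime c m := by
        have h1 : Nat.gcd (a * m) (a * c) = a := by
          rw [← hkc, Nat.mul_comm a m, hmn]; exact hgcd
        rw [Nat.gcd_mul_left] at h1
        have h2 : Nat.gcd m c = 1 :=
          Nat.eq_of_mul_eq_mul_left ha0 (h1.trans (mul_one a).symm)
        exact Nat.Coprime.symm h2
      obtain ⟨c', hc', hcc⟩ := exists_coprime_lift hm (by omega) hn.ne' hc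
      -- a Galois automorphism sending ζ to ζ ^ c'
      have irr : Irreducible (cyclotomic (f : ℕ) ℚ) := cyclotomic.irreducible_rat hn
      let σ1 := IsCyclotomicExtension.fromZetaAut hζ irr
      let σ2 := IsCyclotomicExtension.fromZetaAut (hζ.pow_of_coprime c' hc') irr
      have hσ1 : σ1 (IsCyclotomicExtension.zeta f ℚ K) = ζ :=
        IsCyclotomicExtension.fromZetaAut_spec hζ irr
      have hσ2 : σ2 (IsCyclotomicExtension.zeta f ℚ K) = ζ ^ c' :=
        IsCyclotomicExtension.fromZetaAut_spec (hζ.pow_of_coprime c' hc') irr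
      have hσ : (σ1.symm.trans σ2) ζ = ζ ^ c' := by
        have h3 : σ1.symm ζ = IsCyclotomicExtension.zeta f ℚ K := by
          rw [← hσ1, AlgEquiv.symm_apply_apply]
        rw [AlgEquiv.trans_apply, h3, hσ2]
      apply Subgroup.subset_closure
      refine Or.inr (Or.inr ⟨σ1.symm.trans σ2, a, ha, ?_, ?_, ?_⟩)
      · have hfa : (f : ℕ) / a = m := Nat.div_div_self hm hn.ne'
        rw [hfa, Nat.gcd_comm]; exact hunit
      · intro haf
        rw [haf] at hmn
        have h6 : 2 * (f : ℕ) ≤ m * (f : ℕ) := Nat.mul_le_mul_right _ hm1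
        omega
      · rw [map_sub, map_one, map_pow, hσ, ← pow_mul, hu, hηk, hkc]
        congr 1
        have h5 : a * m = (f : ℕ) := by rw [Nat.mul_comm]; exact hmn
        have h4 : a * c' ≡ a * c [MOD (f : ℕ)] := by
          have := Nat.ModEq.mul_left' (c := a) hcc
          rwa [h5] at this
        have h6 : c' * a ≡ a * c [MOD (f : ℕ)] := by rwa [Nat.mul_comm c' a]
        exact pow_eq_pow_of_modEq_aux hζ.pow_eq_one h6.symm
    · -- inductive step: pick a prime p dividing both m and f/m and raise the order
      obtain ⟨p, hp, hpg⟩ := Nat.exists_prime_and_dvd hunit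
      have hpm : p ∣ m := hpg.trans (Nat.gcd_dvd_left _ _)
      have hpa : p ∣ (f : ℕ) / m := hpg.trans (Nat.gcd_dvd_right _ _)
      have hp1 : 1 < p := hp.one_lt
      have hpmn : p * m ∣ (f : ℕ) := by
        obtain ⟨s, hs⟩ := hpa
        exact ⟨s, by rw [← hmn, hs]; ring⟩
      have hpk : p ∣ k := hpa.trans (hgcd ▸ Nat.gcd_dvd_right (f : ℕ) k)
      set θ := ζ ^ (k / p) with hθ_def
      have hθp : θ ^ p = η := by
        rw [hθ_def, ← pow_mul, Nat.div_mul_cancel hpk, hηk]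
      have hppos : 0 < p := hp.pos
      have hpf : p ∣ (f : ℕ) := dvd_trans (Dvd.intro m rfl) hpmn
      have hpprim : IsPrimitiveRoot (ζ ^ ((f : ℕ) / p)) p :=
        hζ.pow hn (Nat.div_mul_cancel hpf).symm
      have hProd : 1 - η = ∏ ω ∈ nthRootsFinset p (1 : K), (1 - ω * θ) := by
        have := hpprim.pow_sub_pow_eq_prod_sub_mul 1 θ hppos
        rwa [one_pow, hθp] at this
      -- each factor is 1 - x with x a primitive (p*m)-th root of unity
      have hfac : ∀ ω ∈ nthRootsFinset p (1 : K), IsPrimitiveRoot (ω * θ) (p * m) := by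
        intro ω hω
        have hωp : ω ^ p = 1 := (Polynomial.mem_nthRootsFinset hppos (1 : K)).mp hω
        set x := ω * θ with hx_def
        have hxp : x ^ p = η := by rw [hx_def, mul_pow, hωp, one_mul, hθp]
        have hxfin : x ^ (p * m) = 1 := by rw [pow_mul, hxp, hη.pow_eq_one]
        have hd_dvd : orderOf x ∣ p * m := orderOf_dvd_of_pow_eq_one hxfin
        have hord : orderOf (x ^ p) = orderOf x / Nat.gcd (orderOf x) p :=
          orderOf_pow' _ hp.ne_zero
        have hmx : m = orderOf x / Nat.gcd (orderOf x) p := by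
          rw [← hord, hxp, ← hη.eq_orderOf]
        rcases (Nat.dvd_prime hp).mp (Nat.gcd_dvd_right (orderOf x) p) with h1 | h1
        · -- gcd = 1 : contradiction
          exfalso
          rw [h1, Nat.div_one] at hmx
          -- x has order m, hence θ^m = 1
          have hxm : x ^ m = 1 := by rw [hmx]; exact pow_orderOf_eq_one x
          have hωm : ω ^ m = 1 := by
            obtain ⟨s, hs⟩ := hpm
            rw [hs, pow_mul, hωp, one_pow]
          have hθm : θ ^ m = 1 := by
            have := hxm
            rw [hx_def, mul_pow, hωm, one_mul] at this
            exact this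
          have he_dvd : orderOf θ ∣ m := orderOf_dvd_of_pow_eq_one hθm
          have he_ord : orderOf (θ ^ p) = orderOf θ / Nat.gcd (orderOf θ) p :=
            orderOf_pow' _ hp.ne_zero
          have hme : m = orderOf θ / Nat.gcd (orderOf θ) p := by
            rw [← he_ord, hθp, ← hη.eq_orderOf]
          have hle1 : orderOf θ ≤ m := Nat.le_of_dvd (by omega) he_dvd
          have hle2 : m ≤ orderOf θ := hme ▸ Nat.div_le_self _ _
          have heq : orderOf θ = m := le_antisymm hle1 hle2
          rw [heq] at hme
          have hgcd1 : Nat.gcd m p = 1 := by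
            rcases (Nat.dvd_prime hp).mp (Nat.gcd_dvd_right m p) with h2 | h2
            · exact h2
            · exfalso
              rw [h2] at hme
              have hlt := Nat.div_lt_self (show 0 < m by omega) hp1
              omega
          have hpd1 : p ∣ 1 := hgcd1 ▸ Nat.dvd_gcd hpm dvd_rfl
          have := Nat.dvd_one.mp hpd1
          omega
        · -- gcd = p : order is p * m
          have hpd : p ∣ orderOf x := h1 ▸ Nat.gcd_dvd_left (orderOf x) p
          have hdx : orderOf x = p * m := by
            rw [h1] at hmx
            obtain ⟨s, hs⟩ := hpd
            rw [hs, Nat.mul_div_cancel_left s hppos] at hmx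
            rw [hs, hmx]
          exact hdx ▸ IsPrimitiveRoot.orderOf x
      -- turn the factors into units and use the induction hypothesis
      have hpm1 : 1 < p * m := by nlinarith
      have hne : ∀ ω ∈ nthRootsFinset p (1 : K), (1 - ω * θ) ≠ 0 := by
        intro ω hω
        exact sub_ne_zero.mpr (Ne.symm ((hfac ω hω).ne_one hpm1))
      classical
      let F : K → Kˣ := fun ω =>
        if h : (1 - ω * θ) ≠ 0 then Units.mk0 _ h else 1
      have hFval : ∀ ω ∈ nthRootsFinset p (1 : K), ((F ω : Kˣ) : K) = 1 - ω * θ := by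
        intro ω hω
        simp only [F, dif_pos (hne ω hω), Units.val_mk0]
      have huF : u = ∏ ω ∈ nthRootsFinset p (1 : K), F ω := by
        apply Units.ext
        rw [hu, hProd]
        rw [Units.coe_prod]
        exact (Finset.prod_congr rfl fun ω hω => (hFval ω hω)).symm
      rw [huF]
      apply Subgroup.prod_mem
      intro ω hω
      -- bound for the induction
      have hq : (f : ℕ) / (p * m) ≤ t := by
        have h7 : (f : ℕ) / (p * m) * (p * m) = (f : ℕ) := Nat.div_mul_cancel hpmn
        have h8 : (f : ℕ) / m * m = (f : ℕ) := Nat.div_mul_cancel hm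
        have h9 : (f : ℕ) / (p * m) * p = (f : ℕ) / m := by
          have hm0 : 0 < m := by omega
          apply Nat.eq_of_mul_eq_mul_right hm0
          calc (f : ℕ) / (p * m) * p * m = (f : ℕ) / (p * m) * (p * m) := by ring
            _ = (f : ℕ) := h7
            _ = (f : ℕ) / m * m := h8.symm
        have hq0 : 0 < (f : ℕ) / (p * m) := Nat.div_pos (Nat.le_of_dvd hn hpmn) (by omega)
        nlinarith [hmt]
      exact ih (p * m) hq hpmn hpm1 (ω * θ) (hfac ω hω) (F ω) (hFval ω hω)

private lemma set2_subset_set1 (f : ℕ+) {K : Type*} [Field K] [Algebra ℚ K]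
    {ζ : K} (hζ : IsPrimitiveRoot ζ f) :
    cycGenSet2 f ζ ⊆ cycGenSet1 f ζ := by
  have hn : 0 < (f : ℕ) := f.pos
  haveI : NeZero ((f : ℕ)) := ⟨hn.ne'⟩
  rintro u (h | h | ⟨σ, a, ha, hga, hane, huv⟩)
  · exact Or.inl h
  · exact Or.inr (Or.inl h)
  have hσζ : IsPrimitiveRoot (σ ζ) (f : ℕ) := hζ.map_of_injective σ.injective
  obtain ⟨i, hilt, hi⟩ := hζ.eq_pow_of_pow_eq_one hσζ.pow_eq_one
  have hcop : Nat.Coprime i (f : ℕ) := (hζ.pow_iff_coprime hn i).mp (hi ▸ hσζ)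
  refine Or.inr (Or.inr ⟨((i * a : ℕ) : ℤ), ?_, ?_⟩)
  · intro hdvd
    have hdvd' : (f : ℕ) ∣ i * a := by exact_mod_cast hdvd
    have ha0 : 0 < a := by
      rcases Nat.eq_zero_or_pos a with h0 | h0
      · subst h0; omega
      · exact h0
    set m := (f : ℕ) / a with hm_def
    have hma : a * m = (f : ℕ) := Nat.mul_div_cancel' ha
    obtain ⟨sq, hs⟩ := hdvd'
    have hia : i * a = (m * sq) * a := by rw [hs, ← hma]; ring
    have him : i = m * sq := Nat.eq_of_mul_eq_mul_right ha0 hia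
    have hmi : m ∣ i := ⟨sq, him⟩
    have hmf : m ∣ (f : ℕ) := Nat.div_dvd_of_dvd ha
    have hm1 : m = 1 := Nat.dvd_one.mp (hcop ▸ Nat.dvd_gcd hmi hmf)
    rw [hm1, mul_one] at hma
    exact hane hma
  · rw [zpow_natCast, huv, map_sub, map_one, map_pow, ← hi, ← pow_mul]

/-- Reduction of the generators of the cyclotomic units: the subgroup of `K^×` generated by
`−1`, `ζ_f` and the `1 − ζ_f^b` (for `f ∤ b`) coincides with the subgroup generated by `−1`,
`ζ_f` and the Galois orbits of `1 − ζ_f^a` for `a` a unitary divisor of `f`, `a ≠ f`.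
Consequently the cyclotomic units (elements of the first subgroup that are units of `O_K`)
coincide with the units of `O_K` in the second subgroup. -/
theorem cyclotomic_units_generated_by_unitary_divisors (f : ℕ+) (hf : 3 ≤ (f : ℕ))
    (K : Type*) [Field K] [Algebra ℚ K] [IsCyclotomicExtension {(f : ℕ)} ℚ K]
    (ζ : K) (hζ : IsPrimitiveRoot ζ f) :
    Subgroup.closure (cycGenSet1 f ζ) = Subgroup.closure (cycGenSet2 f ζ) ∧
    {u : Kˣ | u ∈ Subgroup.closure (cycGenSet1 f ζ) ∧
        IsIntegral ℤ (u : K) ∧ IsIntegral ℤ ((u⁻¹ : Kˣ) : K)} =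
      {u : Kˣ | u ∈ Subgroup.closure (cycGenSet2 f ζ) ∧
        IsIntegral ℤ (u : K) ∧ IsIntegral ℤ ((u⁻¹ : Kˣ) : K)} := by
  have hn : 0 < (f : ℕ) := f.pos
  have h1 : Subgroup.closure (cycGenSet1 f ζ) ≤ Subgroup.closure (cycGenSet2 f ζ) := by
    rw [Subgroup.closure_le]
    rintro u (h | h | ⟨b, hb, hub⟩)
    · exact Subgroup.subset_closure (Or.inl h)
    · exact Subgroup.subset_closure (Or.inr (Or.inl h))
    have hζ0 : ζ ≠ 0 := hζ.ne_zero hn.ne'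
    have hfz : (0 : ℤ) < ((f : ℕ) : ℤ) := by exact_mod_cast hn
    set r : ℕ := (b % ((f : ℕ) : ℤ)).toNat with hr_def
    have hr_eq : ((r : ℕ) : ℤ) = b % ((f : ℕ) : ℤ) :=
      Int.toNat_of_nonneg (Int.emod_nonneg b hfz.ne')
    have hζb : ζ ^ b = ζ ^ r := by
      conv_lhs => rw [← Int.mul_ediv_add_emod b ((f : ℕ) : ℤ)]
      rw [zpow_add₀ hζ0, zpow_mul, hζ.zpow_eq_one, one_zpow, one_mul, ← hr_eq, zpow_natCast]
    have hr0 : r ≠ 0 := by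
      intro h0
      apply hb
      apply Int.dvd_of_emod_eq_zero
      rw [← hr_eq, h0, Nat.cast_zero]
    have hrlt : r < (f : ℕ) := by
      have := Int.emod_lt_of_pos b hfz
      omega
    set g := Nat.gcd (f : ℕ) r with hg_def
    have hg0 : 0 < g := Nat.gcd_pos_of_pos_left r hn
    have hgf : g ∣ (f : ℕ) := Nat.gcd_dvd_left _ _
    have hgr : g ∣ r := Nat.gcd_dvd_right _ _
    have hglt : g < (f : ℕ) := lt_of_le_of_lt (Nat.le_of_dvd (by omega) hgr) hrlt
    set m := (f : ℕ) / g with hm_def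
    have hmf : m ∣ (f : ℕ) := Nat.div_dvd_of_dvd hgf
    have hmg : m * g = (f : ℕ) := Nat.div_mul_cancel hgf
    have hm1 : 1 < m := by
      rcases Nat.lt_or_ge 1 m with h | h
      · exact h
      · interval_cases m <;> omega
    have hηprim : IsPrimitiveRoot (ζ ^ r) m := by
      have horder : orderOf (ζ ^ r) = m := by
        rw [orderOf_pow' _ hr0, ← hζ.eq_orderOf]
      exact horder ▸ IsPrimitiveRoot.orderOf (ζ ^ r)
    exact key_lemma f hζ ((f : ℕ) / m) m le_rfl hmf hm1 (ζ ^ r) hηprim u (by rw [hub, hζb])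
  have h2 : Subgroup.closure (cycGenSet2 f ζ) ≤ Subgroup.closure (cycGenSet1 f ζ) :=
    Subgroup.closure_mono (set2_subset_set1 f hζ)
  have heq : Subgroup.closure (cycGenSet1 f ζ) = Subgroup.closure (cycGenSet2 f ζ) :=
    le_antisymm h1 h2
  exact ⟨heq, by rw [heq]⟩
end

section
/- Let p be a prime, d ≥ 2, and A a d × d integer matrix. Set c = p·d·2^{2d−1} and let L be the 2d × 2d integer matrix with block form [[c·p·Id_d, c·A], [0, Id_d]]. Let U be a 2d × 2d integer matrix with det U = ±1, let M = L·U, let m₁, …, m_{2d} ∈ ℝ^{2d} be the columns of M, and let g₁, …, g_{2d} be their Gram–Schmidt orthogonalization. Assume the basis is reduced in the sense that ‖g_i‖ ≤ 2‖g_{i+1}‖ for all 1 ≤ i < 2d. Let 0 ≤ k ≤ 2d be such that for every j ≤ k the first d coordinates of m_j are all zero, and (if k < 2d) some of the first d coordinates of m_{k+1} is nonzero. Then for every x ∈ (ℤ/pℤ)^d with (A mod p)·x = 0, x lies in the (ℤ/pℤ)-span of the reductions modulo p of the vectors of last d coordinates of m₁, …, m_k. -/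
open Finset in
private lemma aux_abs_coord_le_norm {n : ℕ} (v : EuclideanSpace ℝ (Fin n)) (i : Fin n) :
    |v i| ≤ ‖v‖ := by
  rw [EuclideanSpace.norm_eq]
  calc |v i| = Real.sqrt (‖v i‖ ^ 2) := by
        rw [Real.sqrt_sq_eq_abs, abs_norm]; simp [Real.norm_eq_abs]
  _ ≤ _ := by
      apply Real.sqrt_le_sqrt
      exact Finset.single_le_sum (f := fun j => ‖v j‖ ^ 2) (fun j _ => sq_nonneg _) (mem_univ i)

open Finset in
private lemma aux_inner_self {E ι : Type*} [NormedAddCommGroup E]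
    [InnerProductSpace ℝ E] [LinearOrder ι] [LocallyFiniteOrderBot ι] [WellFoundedLT ι]
    (f : ι → E) (t : ι) :
    inner ℝ (InnerProductSpace.gramSchmidt ℝ f t) (f t) = ‖InnerProductSpace.gramSchmidt ℝ f t‖ ^ 2 := by
  conv_lhs => rw [InnerProductSpace.gramSchmidt_def'' ℝ f t]
  rw [inner_add_right, inner_sum, ← real_inner_self_eq_norm_sq]
  convert add_zero _
  apply Finset.sum_eq_zero
  intro i hi
  rw [inner_smul_right, InnerProductSpace.gramSchmidt_orthogonal ℝ f (Finset.mem_Iio.mp hi).ne', mul_zero]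

private lemma aux_case {d : ℕ} (t : Fin (d + d)) :
    (∃ s : Fin d, t = Fin.castAdd d s) ∨ ∃ s : Fin d, t = Fin.natAdd d s := by
  rcases h : finSumFinEquiv.symm t with s | s
  · left; exact ⟨s, by rw [← finSumFinEquiv_apply_left, ← h, Equiv.apply_symm_apply]⟩
  · right; exact ⟨s, by rw [← finSumFinEquiv_apply_right, ← h, Equiv.apply_symm_apply]⟩

instance (n : ℕ) : WellFoundedLT (Fin n) := inferInstance
/-- Reduction from the kernel problem over `ℤ/pℤ` to lattice reduction: if the basis `M = LU`
of the lattice built from `A` (with blocks `[[cp·Id, c·A], [0, Id]]`, `c = p·d·2^{2d−1}`) has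
non-increasing-by-more-than-a-factor-2 Gram–Schmidt norms, and its first `k` columns are
exactly those vanishing on the first `d` coordinates, then every kernel vector of `A mod p`
lies in the span of the reductions mod `p` of the lower halves of these `k` columns. -/
theorem kernel_mem_span_of_reduced_lattice_basis
    (p : ℕ) (hp : p.Prime) (d : ℕ) (hd : 2 ≤ d)
    (A : Matrix (Fin d) (Fin d) ℤ)
    (c : ℤ) (hc : c = (p : ℤ) * (d : ℤ) * 2 ^ (2 * d - 1))
    (L U : Matrix (Fin (d + d)) (Fin (d + d)) ℤ)
    (hL : L = Matrix.reindex finSumFinEquiv finSumFinEquiv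
      (Matrix.fromBlocks ((c * (p : ℤ)) • (1 : Matrix (Fin d) (Fin d) ℤ)) (c • A) 0 1))
    (hU : IsUnit U.det)
    (M : Matrix (Fin (d + d)) (Fin (d + d)) ℤ) (hM : M = L * U)
    (mcol : Fin (d + d) → EuclideanSpace ℝ (Fin (d + d)))
    (hmcol : ∀ j i, mcol j i = (M i j : ℝ))
    (hreduced : ∀ (i : Fin (d + d)) (h : (i : ℕ) + 1 < d + d),
      ‖InnerProductSpace.gramSchmidt ℝ mcol i‖ ≤ 2 * ‖InnerProductSpace.gramSchmidt ℝ mcol ⟨(i : ℕ) + 1, h⟩‖)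
    (k : ℕ) (hk : k ≤ d + d)
    (hzero : ∀ j : Fin (d + d), (j : ℕ) < k → ∀ i : Fin d, M (Fin.castAdd d i) j = 0)
    (hnonzero : ∀ h : k < d + d, ∃ i : Fin d, M (Fin.castAdd d i) ⟨k, h⟩ ≠ 0)
    (x : Fin d → ZMod p) (hx : (A.map (Int.cast : ℤ → ZMod p)).mulVec x = 0) :
    x ∈ Submodule.span (ZMod p)
      {v : Fin d → ZMod p | ∃ j : Fin (d + d), (j : ℕ) < k ∧
        v = fun i => ((M (Fin.natAdd d i) j : ℤ) : ZMod p)} := by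
  classical
  have hp0 : 0 < p := hp.pos
  haveI : NeZero p := ⟨hp0.ne'⟩
  have hd0 : 0 < d := by omega
  have hc0 : (0 : ℤ) < c := by
    rw [hc]
    have h1 : (0 : ℤ) < (p : ℤ) := by exact_mod_cast hp0
    have h2 : (0 : ℤ) < (d : ℤ) := by exact_mod_cast hd0
    positivity
  -- entries of L
  obtain ⟨hL11, hL12, hL21, hL22⟩ :
      (∀ i j : Fin d, L (Fin.castAdd d i) (Fin.castAdd d j)
          = c * p * (if i = j then 1 else 0))
      ∧ (∀ i j : Fin d, L (Fin.castAdd d i) (Fin.natAdd d j) = c * A i j)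
      ∧ (∀ i j : Fin d, L (Fin.natAdd d i) (Fin.castAdd d j) = 0)
      ∧ (∀ i j : Fin d, L (Fin.natAdd d i) (Fin.natAdd d j) = if i = j then 1 else 0) := by
    subst hL
    refine ⟨fun i j => ?_, fun i j => ?_, fun i j => ?_, fun i j => ?_⟩ <;>
      simp only [Matrix.reindex_apply, Matrix.submatrix_apply,
        finSumFinEquiv_symm_apply_castAdd, finSumFinEquiv_symm_apply_natAdd,
        Matrix.fromBlocks_apply₁₁, Matrix.fromBlocks_apply₁₂,
        Matrix.fromBlocks_apply₂₁, Matrix.fromBlocks_apply₂₂,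
        Matrix.smul_apply, Matrix.one_apply, Matrix.zero_apply, smul_eq_mul,
        mul_ite, mul_one, mul_zero]
  -- c divides the upper entries of M
  have hMdvd : ∀ (i : Fin d) (j : Fin (d + d)), c ∣ M (Fin.castAdd d i) j := by
    intro i j
    rw [hM, Matrix.mul_apply]
    apply Finset.dvd_sum
    intro t _
    apply dvd_mul_of_dvd_left
    rcases aux_case t with ⟨s, rfl⟩ | ⟨s, rfl⟩
    · rw [hL11]; exact Dvd.dvd.mul_right (dvd_mul_right c _) _
    · rw [hL12]; exact dvd_mul_right c _
  -- integer lift of x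
  set xt : Fin d → ℤ := fun i => ((x i).val : ℤ) with hxt
  have hxtx : ∀ i, ((xt i : ℤ) : ZMod p) = x i := by
    intro i
    simp [hxt, ZMod.natCast_val, ZMod.cast_id]
  have hxtnn : ∀ i, 0 ≤ xt i := fun i => Int.natCast_nonneg _
  have hxtlt : ∀ i, xt i < p := by
    intro i
    simp only [hxt]
    exact_mod_cast (x i).val_lt
  have hdvd : ∀ i, (p : ℤ) ∣ A.mulVec xt i := by
    intro i
    have h0 : ((A.mulVec xt i : ℤ) : ZMod p) = 0 := by
      have hxi := congrFun hx i
      rw [Matrix.mulVec, dotProduct] at hxi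
      simp only [Pi.zero_apply] at hxi
      rw [Matrix.mulVec, dotProduct]
      push_cast
      rw [← hxi]
      refine Finset.sum_congr rfl fun j _ => ?_
      rw [Matrix.map_apply, hxtx]
    exact_mod_cast (ZMod.intCast_zmod_eq_zero_iff_dvd _ p).mp h0
  set y : Fin d → ℤ := fun i => A.mulVec xt i / p with hy'
  have hy : ∀ i, (p : ℤ) * y i = A.mulVec xt i := fun i => Int.mul_ediv_cancel' (hdvd i)
  -- the lattice vector (0, xt) expressed in basis L and basis M
  set w : Fin (d + d) → ℤ :=
    fun t => Sum.elim (fun s => -(y s)) xt (finSumFinEquiv.symm t) with hw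
  have hw1 : ∀ s : Fin d, w (Fin.castAdd d s) = -(y s) := by
    intro s; simp only [hw, finSumFinEquiv_symm_apply_castAdd, Sum.elim_inl]
  have hw2 : ∀ s : Fin d, w (Fin.natAdd d s) = xt s := by
    intro s; simp only [hw, finSumFinEquiv_symm_apply_natAdd, Sum.elim_inr]
  have hLw1 : ∀ i : Fin d, L.mulVec w (Fin.castAdd d i) = 0 := by
    intro i
    rw [Matrix.mulVec, dotProduct, Fin.sum_univ_add]
    simp only [hL11, hL12, hw1, hw2]
    have e1 : ∑ j : Fin d, (c * (p : ℤ) * if i = j then 1 else 0) * (-(y j))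
        = -(c * (p : ℤ) * y i) := by
      rw [Finset.sum_eq_single i]
      · simp
      · intro b _ hb
        simp [if_neg (Ne.symm hb)]
      · simp
    have e2 : ∑ j : Fin d, c * A i j * xt j = c * ((p : ℤ) * y i) := by
      rw [hy, Matrix.mulVec, dotProduct, Finset.mul_sum]
      exact Finset.sum_congr rfl fun j _ => by ring
    rw [e1, e2]
    ring
  have hLw2 : ∀ i : Fin d, L.mulVec w (Fin.natAdd d i) = xt i := by
    intro i
    rw [Matrix.mulVec, dotProduct, Fin.sum_univ_add]
    simp only [hL21, hL22, hw1, hw2, zero_mul, Finset.sum_const_zero, zero_add]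
    rw [Finset.sum_eq_single i]
    · simp
    · intro b _ hb
      simp [if_neg (Ne.symm hb)]
    · simp
  -- coordinates of the vector in the M basis
  set a : Fin (d + d) → ℤ := (U⁻¹).mulVec w with ha
  have hMa : M.mulVec a = L.mulVec w := by
    rw [hM, ha, Matrix.mulVec_mulVec, Matrix.mul_nonsing_inv_cancel_right _ _ hU]
  -- the real vector
  set vR : EuclideanSpace ℝ (Fin (d + d)) := ∑ j, ((a j : ℝ) • mcol j) with hvR
  have hvRapp : ∀ i, vR i = ((M.mulVec a) i : ℝ) := by
    intro i
    rw [hvR, WithLp.ofLp_sum, Finset.sum_apply]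
    simp only [PiLp.smul_apply, smul_eq_mul, hmcol]
    rw [Matrix.mulVec, dotProduct]
    push_cast
    exact Finset.sum_congr rfl fun j _ => mul_comm _ _
  have hvup : ∀ i : Fin d, vR (Fin.castAdd d i) = 0 := by
    intro i
    rw [hvRapp, hMa, hLw1]
    simp
  have hvlow : ∀ i : Fin d, vR (Fin.natAdd d i) = (xt i : ℝ) := by
    intro i
    rw [hvRapp, hMa, hLw2]
  -- norm bound for vR
  have hvRnorm : ‖vR‖ ^ 2 < ((p : ℝ) * d) ^ 2 := by
    have h1 : ‖vR‖ ^ 2 = ∑ i, vR i * vR i := by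
      rw [← real_inner_self_eq_norm_sq, PiLp.inner_apply]
      simp [RCLike.inner_apply, conj_trivial, sq]
    rw [h1, Fin.sum_univ_add]
    have h2 : ∑ i : Fin d, vR (Fin.castAdd d i) * vR (Fin.castAdd d i) = 0 := by
      apply Finset.sum_eq_zero; intro i _; rw [hvup]; ring
    have h3 : ∑ i : Fin d, vR (Fin.natAdd d i) * vR (Fin.natAdd d i)
        < (d : ℝ) * (p : ℝ) ^ 2 := by
      have : ∀ i : Fin d, vR (Fin.natAdd d i) * vR (Fin.natAdd d i) < (p : ℝ) ^ 2 := by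
        intro i
        rw [hvlow, ← sq]
        have hb : |(xt i : ℝ)| < (p : ℝ) := by
          rw [abs_of_nonneg (by exact_mod_cast hxtnn i)]
          exact_mod_cast hxtlt i
        calc (xt i : ℝ) ^ 2 = |(xt i : ℝ)| ^ 2 := (sq_abs _).symm
        _ < (p : ℝ) ^ 2 := by
            apply pow_lt_pow_left₀ hb (abs_nonneg _)
            norm_num
      calc ∑ i : Fin d, vR (Fin.natAdd d i) * vR (Fin.natAdd d i)
          < ∑ _i : Fin d, (p : ℝ) ^ 2 :=
            Finset.sum_lt_sum_of_nonempty (Finset.univ_nonempty_iff.mpr ⟨⟨0, hd0⟩⟩)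
              fun i _ => this i
      _ = (d : ℝ) * (p : ℝ) ^ 2 := by simp [mul_comm]
    have h4 : (d : ℝ) * (p : ℝ) ^ 2 ≤ ((p : ℝ) * d) ^ 2 := by
      have hd1 : (1 : ℝ) ≤ (d : ℝ) := by exact_mod_cast hd0
      nlinarith [sq_nonneg ((p : ℝ) * d)]
    rw [h2, zero_add]
    exact lt_of_lt_of_le h3 h4
  -- upper coordinates of the Gram-Schmidt vectors with index < k vanish
  have hmzero : ∀ j : Fin (d + d), (j : ℕ) < k → ∀ i : Fin d,
      mcol j (Fin.castAdd d i) = 0 := by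
    intro j hj i
    rw [hmcol, hzero j hj i]
    norm_num
  have hgzero : ∀ j : Fin (d + d), (j : ℕ) < k → ∀ i : Fin d,
      InnerProductSpace.gramSchmidt ℝ mcol j (Fin.castAdd d i) = 0 := by
    intro j hj i
    have hmem := InnerProductSpace.gramSchmidt_mem_span ℝ mcol (le_refl j)
    have hle : Submodule.span ℝ (mcol '' Set.Iic j) ≤
        LinearMap.ker (EuclideanSpace.proj (𝕜 := ℝ) (Fin.castAdd d i)).toLinearMap := by
      rw [Submodule.span_le]
      rintro v ⟨j', hj', rfl⟩
      simp only [SetLike.mem_coe, LinearMap.mem_ker, ContinuousLinearMap.coe_coe,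
        PiLp.proj_apply]
      have hval : (j' : ℕ) ≤ (j : ℕ) := hj'
      exact hmzero j' (lt_of_le_of_lt hval hj) i
    simpa using hle hmem
  -- base of the norm chain
  have hgbase : ∀ hkdd : k < d + d, (c : ℝ) ≤ ‖InnerProductSpace.gramSchmidt ℝ mcol ⟨k, hkdd⟩‖ := by
    intro hkdd
    obtain ⟨i0, hi0⟩ := hnonzero hkdd
    set tk : Fin (d + d) := ⟨k, hkdd⟩ with htk
    have hcoord : InnerProductSpace.gramSchmidt ℝ mcol tk (Fin.castAdd d i0)
        = (M (Fin.castAdd d i0) tk : ℝ) := by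
      rw [InnerProductSpace.gramSchmidt_def ℝ mcol tk]
      have hsum : (∑ j ∈ Finset.Iio tk,
          (ℝ ∙ InnerProductSpace.gramSchmidt ℝ mcol j).starProjection (mcol tk))
            (Fin.castAdd d i0) = 0 := by
        rw [WithLp.ofLp_sum, Finset.sum_apply]
        apply Finset.sum_eq_zero
        intro j hj
        have hjk' : j < tk := Finset.mem_Iio.mp hj
        have hjk : (j : ℕ) < k := hjk'
        obtain ⟨r, hr⟩ := Submodule.mem_span_singleton.mp
          (Submodule.starProjection_apply_mem (ℝ ∙ InnerProductSpace.gramSchmidt ℝ mcol j) (mcol tk))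
        rw [← hr, PiLp.smul_apply, hgzero j hjk i0, smul_zero]
      rw [PiLp.sub_apply, hsum, sub_zero, hmcol]
    have habs : (c : ℝ) ≤ |InnerProductSpace.gramSchmidt ℝ mcol tk (Fin.castAdd d i0)| := by
      rw [hcoord, ← Int.cast_abs]
      have hcle : c ≤ |M (Fin.castAdd d i0) tk| :=
        Int.le_of_dvd (abs_pos.mpr hi0) ((dvd_abs _ _).mpr (hMdvd i0 tk))
      exact_mod_cast hcle
    exact le_trans habs (aux_abs_coord_le_norm _ _)
  -- the norm chain
  have hchain : ∀ s : ℕ, ∀ h : k + s < d + d,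
      (c : ℝ) / 2 ^ s ≤ ‖InnerProductSpace.gramSchmidt ℝ mcol ⟨k + s, h⟩‖ := by
    intro s
    induction s with
    | zero => intro h; simpa using hgbase h
    | succ s ih =>
      intro h
      have h' : k + s < d + d := by omega
      have hred := hreduced ⟨k + s, h'⟩ (by omega)
      have ihs := ih h'
      have h2 : (c : ℝ) / 2 ^ s ≤ 2 * ‖InnerProductSpace.gramSchmidt ℝ mcol ⟨k + (s + 1), h⟩‖ :=
        le_trans ihs hred
      rw [pow_succ, ← div_div]
      linarith
  have hpd0 : (0 : ℝ) < (p : ℝ) * d :=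
    mul_pos (by exact_mod_cast hp0) (by exact_mod_cast hd0)
  have hgnorm : ∀ t : Fin (d + d), k ≤ (t : ℕ) →
      (p : ℝ) * d ≤ ‖InnerProductSpace.gramSchmidt ℝ mcol t‖ := by
    intro t ht
    obtain ⟨s, hs⟩ : ∃ s, (t : ℕ) = k + s := ⟨(t : ℕ) - k, by omega⟩
    have h : k + s < d + d := hs ▸ t.isLt
    have ht' : t = ⟨k + s, h⟩ := Fin.ext hs
    rw [ht']
    refine le_trans ?_ (hchain s h)
    rw [le_div_iff₀ (by positivity)]
    have hs2 : s ≤ 2 * d - 1 := by omega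
    have hpow : (2 : ℝ) ^ s ≤ 2 ^ (2 * d - 1) := pow_le_pow_right₀ one_le_two hs2
    have hcr : (c : ℝ) = (p : ℝ) * d * 2 ^ (2 * d - 1) := by rw [hc]; push_cast; ring
    rw [hcr]
    exact mul_le_mul_of_nonneg_left hpow (le_of_lt hpd0)
  -- the coordinates a t for t ≥ k vanish
  have hazero : ∀ t : Fin (d + d), k ≤ (t : ℕ) → a t = 0 := by
    by_contra hcon
    push_neg at hcon
    obtain ⟨t0, hkt0, ht0⟩ := hcon
    set S : Finset (Fin (d + d)) :=
      Finset.univ.filter (fun t => k ≤ (t : ℕ) ∧ a t ≠ 0) with hS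
    have hSne : S.Nonempty := ⟨t0, by simp [hS, hkt0, ht0]⟩
    set t := S.max' hSne with htdef
    have htS : t ∈ S := S.max'_mem hSne
    have hkt : k ≤ (t : ℕ) := ((Finset.mem_filter.mp htS).2).1
    have hat : a t ≠ 0 := ((Finset.mem_filter.mp htS).2).2
    have hmax : ∀ j : Fin (d + d), t < j → a j = 0 := by
      intro j hj
      by_contra haj
      have hjval : k ≤ (j : ℕ) := le_trans hkt (le_of_lt hj)
      have hjS : j ∈ S := Finset.mem_filter.mpr ⟨Finset.mem_univ _, hjval, haj⟩
      exact absurd (S.le_max' j hjS) (not_le.mpr hj)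
    have hinner : inner ℝ vR (InnerProductSpace.gramSchmidt ℝ mcol t)
        = (a t : ℝ) * ‖InnerProductSpace.gramSchmidt ℝ mcol t‖ ^ 2 := by
      rw [hvR, sum_inner]
      rw [Finset.sum_eq_single t]
      · rw [inner_smul_left]
        simp only [conj_trivial]
        rw [real_inner_comm, aux_inner_self]
      · intro j _ hjt
        rcases lt_or_gt_of_ne hjt with hlt | hgt
        · rw [inner_smul_left]
          simp only [conj_trivial]
          rw [real_inner_comm, InnerProductSpace.gramSchmidt_inv_triangular ℝ mcol hlt, mul_zero]
        · rw [hmax j hgt]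
          simp
      · intro h; exact absurd (Finset.mem_univ t) h
    have hgt := hgnorm t hkt
    have hgpos : (0 : ℝ) < ‖InnerProductSpace.gramSchmidt ℝ mcol t‖ := lt_of_lt_of_le hpd0 hgt
    have hCS : |inner ℝ vR (InnerProductSpace.gramSchmidt ℝ mcol t)|
        ≤ ‖vR‖ * ‖InnerProductSpace.gramSchmidt ℝ mcol t‖ := abs_real_inner_le_norm _ _
    have h1le : (1 : ℝ) ≤ |(a t : ℝ)| := by
      have : (1 : ℤ) ≤ |a t| := Int.one_le_abs hat
      calc (1 : ℝ) ≤ ((|a t| : ℤ) : ℝ) := by exact_mod_cast this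
      _ = |(a t : ℝ)| := by push_cast; ring
    have habs : |inner ℝ vR (InnerProductSpace.gramSchmidt ℝ mcol t)|
        = |(a t : ℝ)| * ‖InnerProductSpace.gramSchmidt ℝ mcol t‖ ^ 2 := by
      rw [hinner, abs_mul, abs_of_nonneg (sq_nonneg ‖InnerProductSpace.gramSchmidt ℝ mcol t‖)]
    have hvlt : ‖vR‖ < ‖InnerProductSpace.gramSchmidt ℝ mcol t‖ := by
      have h2 : ‖vR‖ ^ 2 < ‖InnerProductSpace.gramSchmidt ℝ mcol t‖ ^ 2 := by nlinarith
      exact lt_of_pow_lt_pow_left₀ 2 (norm_nonneg _) h2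
    nlinarith [habs, hCS, h1le, hvlt, hgpos, norm_nonneg vR,
      mul_lt_mul_of_pos_right hvlt hgpos, sq_nonneg ‖InnerProductSpace.gramSchmidt ℝ mcol t‖]
  -- conclusion
  have hxeq : x = ∑ j ∈ Finset.univ.filter (fun j : Fin (d + d) => (j : ℕ) < k),
      (((a j : ℤ) : ZMod p) • fun i => ((M (Fin.natAdd d i) j : ℤ) : ZMod p)) := by
    funext i
    have hv : (xt i : ℤ) = M.mulVec a (Fin.natAdd d i) := by rw [hMa, hLw2]
    have hxi : x i = ((∑ j, M (Fin.natAdd d i) j * a j : ℤ) : ZMod p) := by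
      rw [← hxtx i, hv]
      rfl
    have lhs : ((∑ j, M (Fin.natAdd d i) j * a j : ℤ) : ZMod p)
        = ∑ j, ((M (Fin.natAdd d i) j : ℤ) : ZMod p) * ((a j : ℤ) : ZMod p) := by
      push_cast
      rfl
    rw [hxi, lhs, Finset.sum_apply, Finset.sum_filter]
    apply Finset.sum_congr rfl
    intro j _
    by_cases hj : (j : ℕ) < k
    · simp only [if_pos hj, Pi.smul_apply, smul_eq_mul]
      ring
    · rw [if_neg hj, hazero j (le_of_not_gt hj)]
      simp
  rw [hxeq]
  apply Submodule.sum_mem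
  intro j hj
  exact Submodule.smul_mem _ _
    (Submodule.subset_span ⟨j, (Finset.mem_filter.mp hj).2, rfl⟩)
end
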